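/- arXiv:1404.6032 — 3 statements merged into one kernel-verified Lean document; each statement's English description precedes it below -/
import Mathlib

section
/- Let Ω ⊆ M^d be an nc domain, let f be a fine holomorphic function on Ω, and let a ∈ Ω ∩ M_n^d. Then for all sufficiently small h, k ∈ M_n^d, the d-tuple X of 4n×4n block matrices with X_r = [[a_r, k_r, h_r, 0],[0, a_r, 0, h_r],[0, 0, a_r, k_r],[0, 0, 0, a_r]] lies in Ω and f(X) = [[f(a), Df(a)[k], Df(a)[h], Hf(a)[h,k]],[0, f(a), 0, Df(a)[h]],[0, 0, f(a), Df(a)[k]],[0, 0, 0, f(a)]]. -/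
open Matrix Filter Topology
open scoped Matrix.Norms.L2Operator Kronecker

noncomputable section

/-- `n × n` complex matrices, with the `L²` operator norm. -/
abbrev Mat (n : ℕ) : Type := Matrix (Fin n) (Fin n) ℂ

/-- `d`-tuples of `n × n` complex matrices, normed by the max of the operator norms. -/
abbrev MatTup (d n : ℕ) : Type := Fin d → Mat n

/-- `M^d`, the disjoint union over all `n` of the `d`-tuples of `n × n` matrices. -/
abbrev MSpace (d : ℕ) : Type := Σ n : ℕ, MatTup d n

/-- Free (noncommutative) polynomials in `d` variables over `ℂ`. -/
abbrev FreePoly (d : ℕ) : Type := FreeAlgebra ℂ (Fin d)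

/-- Evaluation of a free polynomial at a `d`-tuple of matrices. -/
def polyEval {d n : ℕ} (p : FreePoly d) (x : MatTup d n) : Mat n :=
  FreeAlgebra.lift ℂ (fun i => x i) p

/-- The (Fréchet) derivative of the evaluation of a free polynomial, `Dp(a)[h]`. -/
def polyDeriv {d n : ℕ} (p : FreePoly d) (a h : MatTup d n) : Mat n :=
  fderiv ℂ (fun x : MatTup d n => polyEval p x) a h

/-- Assemble a `2 × 2` block matrix.  -/
def blk {n m : ℕ} (A : Matrix (Fin n) (Fin n) ℂ) (B : Matrix (Fin n) (Fin m) ℂ)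
    (C : Matrix (Fin m) (Fin n) ℂ) (D : Matrix (Fin m) (Fin m) ℂ) : Mat (n + m) :=
  Matrix.reindex finSumFinEquiv finSumFinEquiv (Matrix.fromBlocks A B C D)

/-- Coordinatewise direct sum of tuples of matrices. -/
def dSum {d n m : ℕ} (x : MatTup d n) (y : MatTup d m) : MatTup d (n + m) :=
  fun r => blk (x r) 0 0 (y r)

/-- Coordinatewise conjugation `s⁻¹ x s`. -/
def simConj {d n : ℕ} (s : Mat n) (x : MatTup d n) : MatTup d n :=
  fun r => s⁻¹ * x r * s

/-- An nc domain: a d.u. open subset of `M^d` closed under direct sums and unitary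
conjugations. -/
structure IsNCDomain {d : ℕ} (Ω : Set (MSpace d)) : Prop where
  duOpen : ∀ n : ℕ, IsOpen {x : MatTup d n | (⟨n, x⟩ : MSpace d) ∈ Ω}
  dsum_mem : ∀ {n m : ℕ} (x : MatTup d n) (y : MatTup d m),
    (⟨n, x⟩ : MSpace d) ∈ Ω → (⟨m, y⟩ : MSpace d) ∈ Ω →
    (⟨n + m, dSum x y⟩ : MSpace d) ∈ Ω
  unitary_mem : ∀ {n : ℕ} (u : Matrix.unitaryGroup (Fin n) ℂ) (x : MatTup d n),
    (⟨n, x⟩ : MSpace d) ∈ Ω → (⟨n, simConj (u : Mat n) x⟩ : MSpace d) ∈ Ω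

/-- A d.u. open subset of `M^d`: each slice is open. -/
def DUOpen {d : ℕ} (U : Set (MSpace d)) : Prop :=
  ∀ n : ℕ, IsOpen {x : MatTup d n | (⟨n, x⟩ : MSpace d) ∈ U}

/-- An nc function on `Ω`: a graded function respecting direct sums and similarities. -/
structure IsNCFunctionOn {d : ℕ} (Ω : Set (MSpace d)) (f : ∀ n, MatTup d n → Mat n) : Prop where
  dsum_eq : ∀ {n m : ℕ} (x : MatTup d n) (y : MatTup d m),
    (⟨n, x⟩ : MSpace d) ∈ Ω → (⟨m, y⟩ : MSpace d) ∈ Ω →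
    (⟨n + m, dSum x y⟩ : MSpace d) ∈ Ω →
    f (n + m) (dSum x y) = blk (f n x) 0 0 (f m y)
  sim_eq : ∀ {n : ℕ} (s : Mat n) (x : MatTup d n), IsUnit s →
    (⟨n, x⟩ : MSpace d) ∈ Ω → (⟨n, simConj s x⟩ : MSpace d) ∈ Ω →
    f n (simConj s x) = s⁻¹ * f n x * s

/-- A fine open set: a union of nc domains. -/
def FineOpen {d : ℕ} (U : Set (MSpace d)) : Prop :=
  ∀ x ∈ U, ∃ Ω : Set (MSpace d), IsNCDomain Ω ∧ x ∈ Ω ∧ Ω ⊆ U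

/-- A fine holomorphic function: an nc function on a fine open set, locally bounded in
the fine topology. -/
def IsFineHolo {d : ℕ} (U : Set (MSpace d)) (f : ∀ n, MatTup d n → Mat n) : Prop :=
  FineOpen U ∧ IsNCFunctionOn U f ∧
    ∀ a ∈ U, ∃ Ω : Set (MSpace d), IsNCDomain Ω ∧ a ∈ Ω ∧ Ω ⊆ U ∧
      ∃ C : ℝ, ∀ x ∈ Ω, ‖f x.1 x.2‖ ≤ C

/-- `a^{(k)}`, the direct sum of `k` copies of `a`. -/
def ampTup {d n : ℕ} (k : ℕ) (a : MatTup d n) : MatTup d (k * n) :=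
  fun r => Matrix.reindex finProdFinEquiv finProdFinEquiv
    ((1 : Matrix (Fin k) (Fin k) ℂ) ⊗ₖ a r)

/-- The basic fat neighborhood `F(a,r)`: all unitary conjugates of points within `r`
of some `a^{(k)}`. -/
def FBall {d : ℕ} (a : MSpace d) (r : ℝ) : Set (MSpace d) :=
  {y | ∃ k : ℕ, 1 ≤ k ∧ ∃ x : MatTup d (k * a.1), ‖x - ampTup k a.2‖ < r ∧
    ∃ u : Matrix.unitaryGroup (Fin (k * a.1)) ℂ,
      y = ⟨k * a.1, simConj (u : Mat (k * a.1)) x⟩}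

/-- A fat open set. -/
def FatOpen {d : ℕ} (U : Set (MSpace d)) : Prop :=
  ∀ y ∈ U, ∃ ε : ℝ, 0 < ε ∧ FBall y ε ⊆ U

/-- A fat holomorphic function: an nc function on a fat open set, locally bounded in the
fat topology. -/
def IsFatHolo {d : ℕ} (U : Set (MSpace d)) (f : ∀ n, MatTup d n → Mat n) : Prop :=
  FatOpen U ∧ IsNCFunctionOn U f ∧
    ∀ a ∈ U, ∃ ε : ℝ, 0 < ε ∧ FBall a ε ⊆ U ∧
      ∃ C : ℝ, ∀ x ∈ FBall a ε, ‖f x.1 x.2‖ ≤ C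

/-- The Hessian `Hf(a)[h,k]`: the derivative in direction `k` of `x ↦ Df(x)[h]`. -/
def ncHess {d n : ℕ} (f : ∀ m, MatTup d m → Mat m) (a h k : MatTup d n) : Mat n :=
  fderiv ℂ (fun x : MatTup d n => fderiv ℂ (f n) x h) a k

/-- Join a `(d-k)`-tuple and a `k`-tuple into a `d`-tuple. -/
def joinTup {d k : ℕ} (hk : k ≤ d) {n : ℕ} (y : Fin (d - k) → Mat n) (z : Fin k → Mat n) :
    Fin d → Mat n :=
  fun j => if hj : (j : ℕ) < d - k then y ⟨j, hj⟩
    else z ⟨(j : ℕ) - (d - k), by have := j.isLt; omega⟩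

/-- A tuple `a` is broad if every matrix is a polynomial in `a`. -/
def Broad {d n : ℕ} (a : MatTup d n) : Prop :=
  ∀ M : Mat n, ∃ p : FreePoly d, polyEval p a = M

/-- The ampliation `id_k ⊗ L` of a map `L : M_n^d → M_n`, acting blockwise on
`M_{kn}^d` (identifying `M_{kn}` with `k × k` block matrices over `M_n`). -/
def ampFun {d n : ℕ} (L : MatTup d n → Mat n) (k : ℕ) (H : MatTup d (k * n)) : Mat (k * n) :=
  fun p q =>
    L (fun r s t => H r (finProdFinEquiv ((finProdFinEquiv.symm p).1, s))
        (finProdFinEquiv ((finProdFinEquiv.symm q).1, t)))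
      (finProdFinEquiv.symm p).2 (finProdFinEquiv.symm q).2

/-- The set of operator norms of right inverses of the ampliation `L_k`. -/
def RightInvVals {d n : ℕ} (L : MatTup d n → Mat n) (k : ℕ) : Set ℝ :=
  {c | ∃ S : Mat (k * n) →L[ℂ] MatTup d (k * n), (∀ Y, ampFun L k (S Y) = Y) ∧ ‖S‖ = c}

/-- `L` is completely nonsingular: every ampliation has a right inverse, and
`sup_k inf {‖R‖ : R right inverse of L_k} < ∞`. -/
def CompletelyNonsingular {d n : ℕ} (L : MatTup d n → Mat n) : Prop :=
  (∀ k : ℕ, 1 ≤ k → (RightInvVals L k).Nonempty) ∧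
    BddAbove {c : ℝ | ∃ k : ℕ, 1 ≤ k ∧ c = sInf (RightInvVals L k)}

/-- `c(L) = (sup_k inf {‖R‖ : R right inverse of L_k})⁻¹`. -/
def cConst {d n : ℕ} (L : MatTup d n → Mat n) : ℝ :=
  (sSup {c : ℝ | ∃ k : ℕ, 1 ≤ k ∧ c = sInf (RightInvVals L k)})⁻¹

/-- Evaluation of a `J × J` matrix of free polynomials at `x ∈ M_n^d`, as an
`Jn × Jn` matrix. -/
def matPolyEval {d J n : ℕ} (δ : Matrix (Fin J) (Fin J) (FreePoly d)) (x : MatTup d n) :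
    Matrix (Fin (J * n)) (Fin (J * n)) ℂ :=
  fun p q => polyEval (δ (finProdFinEquiv.symm p).1 (finProdFinEquiv.symm q).1) x
    (finProdFinEquiv.symm p).2 (finProdFinEquiv.symm q).2

/-- The basic free open set `G_δ = {x : ‖δ(x)‖ < 1}`. -/
def GSet {d J : ℕ} (δ : Matrix (Fin J) (Fin J) (FreePoly d)) : Set (MSpace d) :=
  {x | ‖matPolyEval δ x.2‖ < 1}

/-- The linear map `Γ ↦ aΓ - Γa` from `M_n` to `M_n^d`. -/
def commMap {d n : ℕ} (a : MatTup d n) : Mat n →ₗ[ℂ] MatTup d n where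
  toFun := fun Γ => fun r => a r * Γ - Γ * a r
  map_add' := by
    intro Γ₁ Γ₂
    funext r
    simp only [Matrix.mul_add, Matrix.add_mul, Pi.add_apply]
    abel
  map_smul' := by
    intro c Γ
    funext r
    simp [Matrix.mul_smul, Matrix.smul_mul, smul_sub]

/-- The subspace `{aΓ - Γa : Γ ∈ M_n}` of `M_n^d`. -/
def commSubspace {d n : ℕ} (a : MatTup d n) : Submodule ℂ (MatTup d n) :=
  LinearMap.range (commMap a)

end

/-! ### Auxiliary material -/

noncomputable section

namespace NCAux

theorem blk_mul {n m : ℕ} (A A' : Matrix (Fin n) (Fin n) ℂ) (B B' : Matrix (Fin n) (Fin m) ℂ)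
    (C C' : Matrix (Fin m) (Fin n) ℂ) (D D' : Matrix (Fin m) (Fin m) ℂ) :
    blk A B C D * blk A' B' C' D'
      = blk (A*A' + B*C') (A*B' + B*D') (C*A' + D*C') (C*B' + D*D') := by
  simp only [blk, reindex_apply, submatrix_mul_equiv, fromBlocks_multiply]

theorem blk_add {n m : ℕ} (A A' : Matrix (Fin n) (Fin n) ℂ) (B B' : Matrix (Fin n) (Fin m) ℂ)
    (C C' : Matrix (Fin m) (Fin n) ℂ) (D D' : Matrix (Fin m) (Fin m) ℂ) :
    blk A B C D + blk A' B' C' D' = blk (A+A') (B+B') (C+C') (D+D') := by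
  simp only [blk, reindex_apply, ← fromBlocks_add]
  rfl

theorem blk_smul {n m : ℕ} (c : ℂ) (A : Matrix (Fin n) (Fin n) ℂ) (B : Matrix (Fin n) (Fin m) ℂ)
    (C : Matrix (Fin m) (Fin n) ℂ) (D : Matrix (Fin m) (Fin m) ℂ) :
    c • blk A B C D = blk (c•A) (c•B) (c•C) (c•D) := by
  ext i j
  simp [blk, ← fromBlocks_smul]

theorem blk_one {n m : ℕ} : (blk 1 0 0 1 : Mat (n+m)) = 1 := by
  simp only [blk, reindex_apply, fromBlocks_one, submatrix_one_equiv]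

theorem blk_zero {n m : ℕ} : (blk 0 0 0 0 : Mat (n+m)) = 0 := by
  simp only [blk, reindex_apply, fromBlocks_zero]
  rfl

theorem blk_inj {n m : ℕ} {A A' : Matrix (Fin n) (Fin n) ℂ} {B B' : Matrix (Fin n) (Fin m) ℂ}
    {C C' : Matrix (Fin m) (Fin n) ℂ} {D D' : Matrix (Fin m) (Fin m) ℂ}
    (h : blk A B C D = blk A' B' C' D') : A = A' ∧ B = B' ∧ C = C' ∧ D = D' := by
  have h2 : (Matrix.fromBlocks A B C D) = Matrix.fromBlocks A' B' C' D' := by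
    have := congrArg (Matrix.reindex finSumFinEquiv.symm finSumFinEquiv.symm) h
    simpa [blk] using this
  refine ⟨?_, ?_, ?_, ?_⟩
  · have := congrArg Matrix.toBlocks₁₁ h2; simpa using this
  · have := congrArg Matrix.toBlocks₁₂ h2; simpa using this
  · have := congrArg Matrix.toBlocks₂₁ h2; simpa using this
  · have := congrArg Matrix.toBlocks₂₂ h2; simpa using this

abbrev BlkQuad (p q : ℕ) : Type :=
  Mat p × Matrix (Fin p) (Fin q) ℂ × Matrix (Fin q) (Fin p) ℂ × Mat q

/-- blk as a linear equivalence. -/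
def blkLE (p q : ℕ) : BlkQuad p q ≃ₗ[ℂ] Mat (p + q) where
  toFun z := blk z.1 z.2.1 z.2.2.1 z.2.2.2
  invFun M :=
    ⟨(Matrix.reindex finSumFinEquiv.symm finSumFinEquiv.symm M).toBlocks₁₁,
     (Matrix.reindex finSumFinEquiv.symm finSumFinEquiv.symm M).toBlocks₁₂,
     (Matrix.reindex finSumFinEquiv.symm finSumFinEquiv.symm M).toBlocks₂₁,
     (Matrix.reindex finSumFinEquiv.symm finSumFinEquiv.symm M).toBlocks₂₂⟩
  map_add' z w := by
    obtain ⟨A,B,C,D⟩ := z; obtain ⟨A',B',C',D'⟩ := w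
    exact (blk_add A A' B B' C C' D D').symm
  map_smul' c z := by
    obtain ⟨A,B,C,D⟩ := z
    exact (blk_smul c A B C D).symm
  left_inv z := by
    obtain ⟨A,B,C,D⟩ := z
    simp [blk, toBlocks_fromBlocks₁₁, toBlocks_fromBlocks₁₂,
      toBlocks_fromBlocks₂₁, toBlocks_fromBlocks₂₂]
  right_inv M := by
    simp [blk, fromBlocks_toBlocks]

def blkCLE (p q : ℕ) : BlkQuad p q ≃L[ℂ] Mat (p + q) :=
  (blkLE p q).toContinuousLinearEquiv

/-- extraction of the four blocks -/
def e11 {p q : ℕ} (M : Mat (p + q)) : Mat p := ((blkLE p q).symm M).1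
def e12 {p q : ℕ} (M : Mat (p + q)) : Matrix (Fin p) (Fin q) ℂ := ((blkLE p q).symm M).2.1
def e21 {p q : ℕ} (M : Mat (p + q)) : Matrix (Fin q) (Fin p) ℂ := ((blkLE p q).symm M).2.2.1
def e22 {p q : ℕ} (M : Mat (p + q)) : Mat q := ((blkLE p q).symm M).2.2.2

theorem blk_eq {p q : ℕ} (M : Mat (p + q)) : blk (e11 M) (e12 M) (e21 M) (e22 M) = M := by
  have := (blkLE p q).apply_symm_apply M
  simpa [blkLE, e11, e12, e21, e22] using this

@[simp] theorem e11_blk {p q : ℕ} (A) (B) (C) (D) :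
    e11 (p := p) (q := q) (blk A B C D) = A := by
  rw [e11, show (blk A B C D) = blkLE p q (A,B,C,D) from rfl, LinearEquiv.symm_apply_apply]

@[simp] theorem e12_blk {p q : ℕ} (A) (B) (C) (D) :
    e12 (p := p) (q := q) (blk A B C D) = B := by
  rw [e12, show (blk A B C D) = blkLE p q (A,B,C,D) from rfl, LinearEquiv.symm_apply_apply]

@[simp] theorem e21_blk {p q : ℕ} (A) (B) (C) (D) :
    e21 (p := p) (q := q) (blk A B C D) = C := by
  rw [e21, show (blk A B C D) = blkLE p q (A,B,C,D) from rfl, LinearEquiv.symm_apply_apply]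

@[simp] theorem e22_blk {p q : ℕ} (A) (B) (C) (D) :
    e22 (p := p) (q := q) (blk A B C D) = D := by
  rw [e22, show (blk A B C D) = blkLE p q (A,B,C,D) from rfl, LinearEquiv.symm_apply_apply]

/-- e12 as a continuous linear map -/
def e12CLM (p q : ℕ) : Mat (p + q) →L[ℂ] Matrix (Fin p) (Fin q) ℂ :=
  (ContinuousLinearMap.fst ℂ _ _).comp
    ((ContinuousLinearMap.snd ℂ _ _).comp (blkCLE p q).symm.toContinuousLinearMap)

@[simp] theorem e12CLM_apply {p q : ℕ} (M : Mat (p + q)) : e12CLM p q M = e12 M := rfl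

/-- e11 as a continuous linear map -/
def e11CLM (p q : ℕ) : Mat (p + q) →L[ℂ] Mat p :=
  (ContinuousLinearMap.fst ℂ _ _).comp (blkCLE p q).symm.toContinuousLinearMap

@[simp] theorem e11CLM_apply {p q : ℕ} (M : Mat (p + q)) : e11CLM p q M = e11 M := rfl

/-- e21 as a continuous linear map -/
def e21CLM (p q : ℕ) : Mat (p + q) →L[ℂ] Matrix (Fin q) (Fin p) ℂ :=
  (ContinuousLinearMap.fst ℂ _ _).comp ((ContinuousLinearMap.snd ℂ _ _).comp
    ((ContinuousLinearMap.snd ℂ _ _).comp (blkCLE p q).symm.toContinuousLinearMap))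

@[simp] theorem e21CLM_apply {p q : ℕ} (M : Mat (p + q)) : e21CLM p q M = e21 M := rfl

def e22CLM (p q : ℕ) : Mat (p + q) →L[ℂ] Mat q :=
  (ContinuousLinearMap.snd ℂ _ _).comp ((ContinuousLinearMap.snd ℂ _ _).comp
    ((ContinuousLinearMap.snd ℂ _ _).comp (blkCLE p q).symm.toContinuousLinearMap))

@[simp] theorem e22CLM_apply {p q : ℕ} (M : Mat (p + q)) : e22CLM p q M = e22 M := rfl

/-- Tblk -/
def Tblk {d m : ℕ} (x H y : MatTup d m) : MatTup d (m + m) :=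
  fun r => blk (x r) (H r) 0 (y r)

theorem Tblk_zero {d m : ℕ} (x y : MatTup d m) : Tblk x 0 y = dSum x y := rfl

def TblkL (d m : ℕ) : (MatTup d m × MatTup d m × MatTup d m) →ₗ[ℂ] MatTup d (m + m) where
  toFun z := Tblk z.1 z.2.1 z.2.2
  map_add' z w := by
    funext r
    simp [Tblk, blk_add]
  map_smul' c z := by
    funext r
    simp [Tblk, blk_smul]

def TblkCLM (d m : ℕ) : (MatTup d m × MatTup d m × MatTup d m) →L[ℂ] MatTup d (m + m) :=
  (TblkL d m).toContinuousLinearMap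

theorem Tblk_norm_le {d m : ℕ} (x H y : MatTup d m) :
    ‖Tblk x H y‖ ≤ ‖TblkCLM d m‖ * max ‖x‖ (max ‖H‖ ‖y‖) := by
  have := (TblkCLM d m).le_opNorm (x, H, y)
  simpa [Prod.norm_def, TblkCLM, TblkL] using this

theorem Tblk_sub {d m : ℕ} (x H y x' H' y' : MatTup d m) :
    Tblk x H y - Tblk x' H' y' = Tblk (x - x') (H - H') (y - y') := by
  have := (TblkL d m).map_sub (x, H, y) (x', H', y')
  simpa [TblkL] using this.symm

/-- diagonal scaling matrix -/
def Sdiag (p q : ℕ) (t : ℂ) : Mat (p + q) := blk 1 0 0 (t • 1)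

theorem Sdiag_mul (p q : ℕ) (t s : ℂ) :
    Sdiag p q t * Sdiag p q s = Sdiag p q (t * s) := by
  rw [mul_comm t s]
  simp [Sdiag, blk_mul, Matrix.smul_mul, Matrix.mul_smul, smul_smul]

theorem Sdiag_isUnit (p q : ℕ) {t : ℂ} (ht : t ≠ 0) : IsUnit (Sdiag p q t) := by
  refine ⟨⟨Sdiag p q t, Sdiag p q t⁻¹, ?_, ?_⟩, rfl⟩ <;>
    rw [Sdiag_mul] <;>
    simp [ht, mul_inv_cancel₀ ht, inv_mul_cancel₀ ht, Sdiag, blk_one]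

theorem Sdiag_inv (p q : ℕ) {t : ℂ} (ht : t ≠ 0) :
    (Sdiag p q t)⁻¹ = Sdiag p q t⁻¹ := by
  apply Matrix.inv_eq_right_inv
  rw [Sdiag_mul]
  simp [mul_inv_cancel₀ ht, Sdiag, blk_one]

theorem Sdiag_conj {p q : ℕ} {t : ℂ} (ht : t ≠ 0) (A : Mat p) (B : Matrix (Fin p) (Fin q) ℂ)
    (C : Matrix (Fin q) (Fin p) ℂ) (D : Mat q) :
    (Sdiag p q t)⁻¹ * blk A B C D * Sdiag p q t
      = blk A (t • B) (t⁻¹ • C) D := by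
  rw [Sdiag_inv p q ht]
  simp [Sdiag, blk_mul, Matrix.smul_mul, Matrix.mul_smul, smul_smul,
    inv_mul_cancel₀ ht, mul_inv_cancel₀ ht]

/-- unipotent matrix -/
def Uni (p : ℕ) : Mat (p + p) := blk 1 1 0 1

theorem Uni_isUnit (p : ℕ) : IsUnit (Uni p) := by
  refine ⟨⟨Uni p, blk 1 (-1) 0 1, ?_, ?_⟩, rfl⟩ <;>
    simp [Uni, blk_mul, ← blk_one]

theorem Uni_inv (p : ℕ) : (Uni p)⁻¹ = blk 1 (-1) 0 1 := by
  apply Matrix.inv_eq_right_inv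
  simp [Uni, blk_mul, ← blk_one]

theorem Uni_conj {p : ℕ} (A B D : Mat p) :
    (Uni p)⁻¹ * blk A B 0 D * Uni p = blk A (A + B - D) 0 D := by
  rw [Uni_inv]
  simp [Uni, blk_mul, sub_eq_add_neg, add_assoc]

/-- block transposition -/
def uSwap (p : ℕ) : Mat ((p + p) + (p + p)) :=
  blk (blk 1 0 0 0) (blk 0 0 1 0) (blk 0 1 0 0) (blk 0 0 0 1)

theorem uSwap_mul_self (p : ℕ) : uSwap p * uSwap p = 1 := by
  simp [uSwap, blk_mul, blk_add, blk_zero, blk_one]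

theorem uSwap_isUnit (p : ℕ) : IsUnit (uSwap p) :=
  ⟨⟨uSwap p, uSwap p, uSwap_mul_self p, uSwap_mul_self p⟩, rfl⟩

theorem uSwap_inv (p : ℕ) : (uSwap p)⁻¹ = uSwap p :=
  Matrix.inv_eq_right_inv (uSwap_mul_self p)

theorem uSwap_conj {p : ℕ}
    (m11 m12 m21 m22 m13 m14 m23 m24 m31 m32 m41 m42 m33 m34 m43 m44 : Mat p) :
    uSwap p * blk (blk m11 m12 m21 m22) (blk m13 m14 m23 m24)
        (blk m31 m32 m41 m42) (blk m33 m34 m43 m44) * uSwap p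
      = blk (blk m11 m13 m31 m33) (blk m12 m14 m32 m34)
          (blk m21 m23 m41 m43) (blk m22 m24 m42 m44) := by
  simp [uSwap, blk_mul, blk_add, add_mul, mul_add, blk_zero]

theorem real_smul_norm {V : Type*} [NormedAddCommGroup V] [NormedSpace ℂ V] {t : ℝ}
    (ht : 0 < t) (v : V) : ‖(t : ℂ) • v‖ = t * ‖v‖ := by
  rw [norm_smul, Complex.norm_real, Real.norm_eq_abs, abs_of_pos ht]

/-- A vector with norm bounded by `C * t` for all small positive `t` is zero. -/
theorem eq_zero_of_norm_le_mul {V : Type*} [NormedAddCommGroup V] {v : V} {C : ℝ}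
    (h : ∀ t : ℝ, 0 < t → t ≤ 1 → ‖v‖ ≤ C * t) : v = 0 := by
  by_contra hv
  have hv' : 0 < ‖v‖ := norm_pos_iff.mpr hv
  have hC : 0 < C := by
    have := h 1 one_pos le_rfl
    nlinarith
  have ht1 : 0 < min 1 (‖v‖ / (2 * C)) := by positivity
  have := h _ ht1 (min_le_left _ _)
  have h2 : C * min 1 (‖v‖ / (2 * C)) ≤ C * (‖v‖ / (2 * C)) :=
    mul_le_mul_of_nonneg_left (min_le_right _ _) hC.le
  have h3 : C * (‖v‖ / (2 * C)) = ‖v‖ / 2 := by field_simp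
  nlinarith

end NCAux

end

noncomputable section
namespace NCAux

variable {d : ℕ} {Ω Ω₁ : Set (MSpace d)} {f : ∀ m, MatTup d m → Mat m}

theorem coreAt (hfnc : IsNCFunctionOn Ω f) (hΩ₁ : IsNCDomain Ω₁) (hsub : Ω₁ ⊆ Ω)
    {K : ℝ} (hK : ∀ z ∈ Ω₁, ‖f z.1 z.2‖ ≤ K)
    {m : ℕ} {b : MatTup d m} (hb : (⟨m, b⟩ : MSpace d) ∈ Ω₁) :
    ∃ ρ L : ℝ, 0 < ρ ∧ 0 ≤ L ∧
      (∀ x : MatTup d m, ‖x - b‖ < ρ → (⟨m, x⟩ : MSpace d) ∈ Ω₁) ∧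
      (∀ x H y : MatTup d m, ‖x - b‖ < ρ → ‖H‖ < ρ → ‖y - b‖ < ρ →
        (⟨m + m, Tblk x H y⟩ : MSpace d) ∈ Ω₁) ∧
      (∀ x H y : MatTup d m, ‖x - b‖ < ρ → ‖H‖ < ρ → ‖y - b‖ < ρ → ∀ t : ℂ, t ≠ 0 →
        ‖t • H‖ < ρ →
        f (m + m) (Tblk x (t • H) y)
          = blk (e11 (f (m + m) (Tblk x H y))) (t • e12 (f (m + m) (Tblk x H y)))
              (t⁻¹ • e21 (f (m + m) (Tblk x H y))) (e22 (f (m + m) (Tblk x H y)))) ∧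
      (∀ x H y : MatTup d m, ‖x - b‖ < ρ → ‖H‖ < ρ → ‖y - b‖ < ρ →
        ‖e12 (f (m + m) (Tblk x H y))‖ ≤ L * ‖H‖) ∧
      (∀ x y : MatTup d m, ‖x - b‖ < ρ / 2 → ‖y - b‖ < ρ / 2 →
        f (m + m) (Tblk x (x - y) y) = blk (f m x) (f m x - f m y) 0 (f m y)) ∧
      (∀ x y : MatTup d m, ‖x - b‖ < ρ / 2 → ‖y - b‖ < ρ / 2 →
        ‖f m x - f m y‖ ≤ L * ‖x - y‖) := by
  obtain ⟨ε₁, hε₁pos, hε₁⟩ := Metric.isOpen_iff.mp (hΩ₁.duOpen m) b hb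
  have hbb : (⟨m + m, dSum b b⟩ : MSpace d) ∈ Ω₁ := hΩ₁.dsum_mem b b hb hb
  have hopen2 : IsOpen {z : MatTup d m × MatTup d m × MatTup d m |
      (⟨m + m, Tblk z.1 z.2.1 z.2.2⟩ : MSpace d) ∈ Ω₁} :=
    IsOpen.preimage (TblkCLM d m).continuous (hΩ₁.duOpen (m + m))
  obtain ⟨ε₂, hε₂pos, hε₂⟩ := Metric.isOpen_iff.mp hopen2 (b, 0, b)
    (by simpa [TblkCLM, Tblk_zero] using hbb)
  set ρ := min ε₁ ε₂ with hρdef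
  have hρpos : 0 < ρ := lt_min hε₁pos hε₂pos
  have memA : ∀ x : MatTup d m, ‖x - b‖ < ρ → (⟨m, x⟩ : MSpace d) ∈ Ω₁ := by
    intro x hx
    exact hε₁ (by rw [Metric.mem_ball, dist_eq_norm]; exact hx.trans_le (min_le_left _ _))
  have memB : ∀ x H y : MatTup d m, ‖x - b‖ < ρ → ‖H‖ < ρ → ‖y - b‖ < ρ →
      (⟨m + m, Tblk x H y⟩ : MSpace d) ∈ Ω₁ := by
    intro x H y hx hH hy
    have : (x, H, y) ∈ Metric.ball ((b, 0, b) : MatTup d m × MatTup d m × MatTup d m) ε₂ := by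
      rw [Metric.mem_ball, Prod.dist_eq, Prod.dist_eq]
      simp only [dist_eq_norm, sub_zero]
      have h1 : ‖x - b‖ < ε₂ := hx.trans_le (min_le_right _ _)
      have h2 : ‖H‖ < ε₂ := hH.trans_le (min_le_right _ _)
      have h3 : ‖y - b‖ < ε₂ := hy.trans_le (min_le_right _ _)
      exact max_lt h1 (max_lt h2 h3)
    exact hε₂ this
  have scal : ∀ x H y : MatTup d m, (⟨m + m, Tblk x H y⟩ : MSpace d) ∈ Ω₁ →
      ∀ t : ℂ, t ≠ 0 → (⟨m + m, Tblk x (t • H) y⟩ : MSpace d) ∈ Ω₁ →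
      f (m + m) (Tblk x (t • H) y)
        = blk (e11 (f (m + m) (Tblk x H y))) (t • e12 (f (m + m) (Tblk x H y)))
            (t⁻¹ • e21 (f (m + m) (Tblk x H y))) (e22 (f (m + m) (Tblk x H y))) := by
    intro x H y hmem t ht hmem2
    have hsim : simConj (Sdiag m m t) (Tblk x H y) = Tblk x (t • H) y := by
      funext r
      show (Sdiag m m t)⁻¹ * blk (x r) (H r) 0 (y r) * Sdiag m m t
        = blk (x r) ((t • H) r) 0 (y r)
      rw [Sdiag_conj ht]
      simp
    have hval := hfnc.sim_eq (Sdiag m m t) (Tblk x H y) (Sdiag_isUnit m m ht)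
      (hsub hmem) (by rw [hsim]; exact hsub hmem2)
    rw [hsim] at hval
    rw [hval]
    conv_lhs => rw [← blk_eq (f (m + m) (Tblk x H y))]
    rw [Sdiag_conj ht]
  have diffid : ∀ x y : MatTup d m, (⟨m, x⟩ : MSpace d) ∈ Ω₁ → (⟨m, y⟩ : MSpace d) ∈ Ω₁ →
      (⟨m + m, Tblk x (x - y) y⟩ : MSpace d) ∈ Ω₁ →
      f (m + m) (Tblk x (x - y) y) = blk (f m x) (f m x - f m y) 0 (f m y) := by
    intro x y hx hy hT
    have hds : (⟨m + m, dSum x y⟩ : MSpace d) ∈ Ω₁ := hΩ₁.dsum_mem x y hx hy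
    have hsim : simConj (Uni m) (dSum x y) = Tblk x (x - y) y := by
      funext r
      show (Uni m)⁻¹ * blk (x r) 0 0 (y r) * Uni m = blk (x r) ((x - y) r) 0 (y r)
      rw [Uni_conj]
      simp [sub_eq_add_neg]
    have hval := hfnc.dsum_eq x y (hsub hx) (hsub hy) (hsub hds)
    have hv2 := hfnc.sim_eq (Uni m) (dSum x y) (Uni_isUnit m)
      (hsub hds) (by rw [hsim]; exact hsub hT)
    rw [hsim] at hv2
    rw [hv2, hval, Uni_conj]
    simp [sub_eq_add_neg]
  set cE := ‖e12CLM m m‖ with hcEdef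
  have hcE0 : 0 ≤ cE := by rw [hcEdef]; exact norm_nonneg (e12CLM m m)
  have hK0 : 0 ≤ K := le_trans (norm_nonneg _) (hK ⟨m, b⟩ hb)
  set L := 2 * cE * K / ρ with hLdef
  have hL0 : 0 ≤ L := by positivity
  have bdd : ∀ x H y : MatTup d m, ‖x - b‖ < ρ → ‖H‖ < ρ → ‖y - b‖ < ρ →
      ‖e12 (f (m + m) (Tblk x H y))‖ ≤ L * ‖H‖ := by
    intro x H y hx hH hy
    by_cases h0 : H = 0
    · subst h0
      have hds : (⟨m + m, dSum x y⟩ : MSpace d) ∈ Ω₁ := by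
        have := memB x 0 y hx (by simpa using hρpos) hy
        rwa [Tblk_zero] at this
      rw [Tblk_zero, hfnc.dsum_eq x y (hsub (memA x hx)) (hsub (memA y hy)) (hsub hds)]
      simp
    · have hHpos : 0 < ‖H‖ := norm_pos_iff.mpr h0
      set t : ℝ := ρ / (2 * ‖H‖) with htdef
      have htpos : 0 < t := by positivity
      have htH : ‖(t : ℂ) • H‖ = ρ / 2 := by
        rw [norm_smul, Complex.norm_real, Real.norm_eq_abs, abs_of_pos htpos, htdef]
        field_simp
      have hmem1 := memB x H y hx hH hy
      have hmem2 := memB x ((t : ℂ) • H) y hx (by rw [htH]; linarith) hy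
      have ht0 : (t : ℂ) ≠ 0 := by exact_mod_cast htpos.ne'
      have hs := scal x H y hmem1 (t : ℂ) ht0 hmem2
      have he : e12 (f (m + m) (Tblk x ((t : ℂ) • H) y))
          = (t : ℂ) • e12 (f (m + m) (Tblk x H y)) := by rw [hs]; simp
      have hb2 : ‖e12 (f (m + m) (Tblk x ((t : ℂ) • H) y))‖ ≤ cE * K := by
        calc ‖e12 (f (m + m) (Tblk x ((t : ℂ) • H) y))‖
            ≤ cE * ‖f (m + m) (Tblk x ((t : ℂ) • H) y)‖ := (e12CLM m m).le_opNorm _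
          _ ≤ cE * K := by
              have := hK ⟨m + m, Tblk x ((t : ℂ) • H) y⟩ hmem2
              exact mul_le_mul_of_nonneg_left this hcE0
      rw [he, norm_smul, Complex.norm_real, Real.norm_eq_abs, abs_of_pos htpos] at hb2
      have hfin : ‖e12 (f (m + m) (Tblk x H y))‖ ≤ cE * K / t := by
        rw [le_div_iff₀ htpos]
        linarith [hb2, mul_comm t ‖e12 (f (m + m) (Tblk x H y))‖]
      have harith : cE * K / t = L * ‖H‖ := by
        rw [htdef, hLdef]
        field_simp
      rwa [harith] at hfin
  have lip : ∀ x y : MatTup d m, ‖x - b‖ < ρ / 2 → ‖y - b‖ < ρ / 2 →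
      ‖f m x - f m y‖ ≤ L * ‖x - y‖ := by
    intro x y hx hy
    have hx' : ‖x - b‖ < ρ := hx.trans (by linarith)
    have hy' : ‖y - b‖ < ρ := hy.trans (by linarith)
    have hxy : ‖x - y‖ < ρ := by
      have hxyeq : x - y = (x - b) - (y - b) := by abel
      have := norm_sub_le (x - b) (y - b)
      rw [← hxyeq] at this
      linarith
    have hT := memB x (x - y) y hx' hxy hy'
    have hdi := diffid x y (memA x hx') (memA y hy') hT
    have h12 := bdd x (x - y) y hx' hxy hy'
    rw [hdi] at h12
    simpa using h12
  refine ⟨ρ, L, hρpos, hL0, memA, memB, ?_, bdd, ?_, lip⟩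
  · intro x H y hx hH hy t ht htH
    exact scal x H y (memB x H y hx hH hy) t ht (memB x (t • H) y hx htH hy)
  · intro x y hx hy
    have hx' : ‖x - b‖ < ρ := hx.trans (by linarith)
    have hy' : ‖y - b‖ < ρ := hy.trans (by linarith)
    have hxy : ‖x - y‖ < ρ := by
      have hxyeq : x - y = (x - b) - (y - b) := by abel
      have := norm_sub_le (x - b) (y - b)
      rw [← hxyeq] at this
      linarith
    exact diffid x y (memA x hx') (memA y hy') (memB x (x - y) y hx' hxy hy')

end NCAux
end

noncomputable section
namespace NCAux

variable {d : ℕ} {Ω Ω₁ : Set (MSpace d)} {f : ∀ m, MatTup d m → Mat m}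

set_option maxHeartbeats 2000000 in
theorem mainR1 (hfnc : IsNCFunctionOn Ω f) (hΩ₁ : IsNCDomain Ω₁) (hsub : Ω₁ ⊆ Ω)
    {K : ℝ} (hK : ∀ z ∈ Ω₁, ‖f z.1 z.2‖ ≤ K)
    {m : ℕ} {b : MatTup d m} (hb : (⟨m, b⟩ : MSpace d) ∈ Ω₁) :
    ∃ σ : ℝ, 0 < σ ∧
      (∀ x H y : MatTup d m, ‖x - b‖ < σ → ‖H‖ < σ → ‖y - b‖ < σ →
        (⟨m + m, Tblk x H y⟩ : MSpace d) ∈ Ω₁ ∧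
        f (m + m) (Tblk x H y)
          = blk (f m x) (e12 (f (m + m) (Tblk x H y))) 0 (f m y)) ∧
      (∀ x : MatTup d m, ‖x - b‖ < σ → DifferentiableAt ℂ (f m) x) ∧
      (∀ x H : MatTup d m, ‖x - b‖ < σ → ‖H‖ < σ →
        fderiv ℂ (f m) x H = e12 (f (m + m) (Tblk x H x))) := by
  classical
  obtain ⟨ρ, L, hρ, hL, memA, memB, scal, bdd, diffid, lip⟩ :=
    coreAt hfnc hΩ₁ hsub hK hb
  obtain ⟨ρ₂, L₂, hρ₂, hL₂, memA₂, memB₂, scal₂, bdd₂, diffid₂, lip₂⟩ :=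
    coreAt hfnc hΩ₁ hsub hK (hΩ₁.dsum_mem b b hb hb)
  obtain ⟨cT, hcT0, hcTb⟩ : ∃ c : ℝ, 0 ≤ c ∧
      ∀ u v w : MatTup d m, ‖Tblk u v w‖ ≤ c * max ‖u‖ (max ‖v‖ ‖w‖) :=
    ⟨‖TblkCLM d m‖, norm_nonneg (TblkCLM d m), fun u v w => Tblk_norm_le u v w⟩
  obtain ⟨cE, hcE0, hcEb⟩ : ∃ c : ℝ, 0 ≤ c ∧
      ∀ M N : Mat (m + m), ‖e12 M - e12 N‖ ≤ c * ‖M - N‖ :=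
    ⟨‖e12CLM m m‖, norm_nonneg (e12CLM m m), fun M N => by
      rw [show e12 M - e12 N = e12CLM m m (M - N) by rw [map_sub]; simp]
      exact (e12CLM m m).le_opNorm _⟩
  obtain ⟨cE1, hcE10, hcE1b⟩ : ∃ c : ℝ, 0 ≤ c ∧
      ∀ M N : Mat (m + m), ‖e11 M - e11 N‖ ≤ c * ‖M - N‖ :=
    ⟨‖e11CLM m m‖, norm_nonneg (e11CLM m m), fun M N => by
      rw [show e11 M - e11 N = e11CLM m m (M - N) by rw [map_sub]; simp]
      exact (e11CLM m m).le_opNorm _⟩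
  obtain ⟨cE2, hcE20, hcE2b⟩ : ∃ c : ℝ, 0 ≤ c ∧
      ∀ M : Mat (m + m), ‖e21 M‖ ≤ c * ‖M‖ :=
    ⟨‖e21CLM m m‖, norm_nonneg (e21CLM m m), fun M => by
      rw [show e21 M = e21CLM m m M by simp]
      exact (e21CLM m m).le_opNorm _⟩
  obtain ⟨cE3, hcE30, hcE3b⟩ : ∃ c : ℝ, 0 ≤ c ∧
      ∀ M N : Mat (m + m), ‖e22 M - e22 N‖ ≤ c * ‖M - N‖ :=
    ⟨‖e22CLM m m‖, norm_nonneg (e22CLM m m), fun M N => by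
      rw [show e22 M - e22 N = e22CLM m m (M - N) by rw [map_sub]; simp]
      exact (e22CLM m m).le_opNorm _⟩
  have hK0 : 0 ≤ K := le_trans (norm_nonneg _) (hK ⟨m, b⟩ hb)
  obtain ⟨ρ₃, hρ₃, hρ₃ρhalf, hρ₃ρ₂half⟩ : ∃ r : ℝ, 0 < r ∧ r ≤ ρ / 2 ∧ cT * r < ρ₂ / 2 := by
    refine ⟨min (ρ / 2) (ρ₂ / (2 * (cT + 1))), lt_min (by linarith) (by positivity),
      min_le_left _ _, ?_⟩
    have h1 : min (ρ / 2) (ρ₂ / (2 * (cT + 1))) ≤ ρ₂ / (2 * (cT + 1)) := min_le_right _ _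
    have h2 : cT * min (ρ / 2) (ρ₂ / (2 * (cT + 1))) ≤ cT * (ρ₂ / (2 * (cT + 1))) :=
      mul_le_mul_of_nonneg_left h1 hcT0
    have h3 : cT * (ρ₂ / (2 * (cT + 1))) < ρ₂ / 2 := by
      rw [mul_div_assoc', div_lt_div_iff₀ (by positivity) (by norm_num : (0:ℝ) < 2)]
      nlinarith
    linarith
  have hρ₃ρ : ρ₃ ≤ ρ / 2 := hρ₃ρhalf
  -- distance to the base point at level 2m
  have hTd : ∀ u v w : MatTup d m, ‖u - b‖ < ρ₃ → ‖v‖ < ρ₃ → ‖w - b‖ < ρ₃ →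
      ‖Tblk u v w - dSum b b‖ < ρ₂ / 2 := by
    intro u v w hu hv hw
    have heq : Tblk u v w - dSum b b = Tblk (u - b) v (w - b) := by
      rw [← Tblk_zero, Tblk_sub]
      simp
    have h1 : ‖Tblk (u - b) v (w - b)‖ ≤ cT * max ‖u - b‖ (max ‖v‖ ‖w - b‖) :=
      hcTb _ _ _
    have h2 : max ‖u - b‖ (max ‖v‖ ‖w - b‖) ≤ ρ₃ :=
      le_of_lt (max_lt hu (max_lt hv hw))
    have h3 : cT * max ‖u - b‖ (max ‖v‖ ‖w - b‖) ≤ cT * ρ₃ :=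
      mul_le_mul_of_nonneg_left h2 hcT0
    rw [heq]
    linarith
  -- block formula
  have bf : ∀ x H y : MatTup d m, ‖x - b‖ < ρ₃ → ‖H‖ < ρ₃ → ‖y - b‖ < ρ₃ →
      f (m + m) (Tblk x H y)
        = blk (f m x) (e12 (f (m + m) (Tblk x H y))) 0 (f m y) := by
    intro x H y hx hH hy
    have hx' : ‖x - b‖ < ρ := by linarith
    have hH' : ‖H‖ < ρ := by linarith
    have hy' : ‖y - b‖ < ρ := by linarith
    set M := f (m + m) (Tblk x H y) with hM
    -- scaled values
    have hsc : ∀ t : ℝ, 0 < t → t ≤ 1 →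
        f (m + m) (Tblk x ((t : ℂ) • H) y)
          = blk (e11 M) ((t : ℂ) • e12 M) ((t : ℂ)⁻¹ • e21 M) (e22 M) := by
      intro t ht ht1
      have htH : ‖(t : ℂ) • H‖ < ρ := by
        rw [norm_smul, Complex.norm_real, Real.norm_eq_abs, abs_of_pos ht]
        nlinarith
      exact scal x H y hx' hH' hy' (t : ℂ) (by exact_mod_cast ht.ne') htH
    have htH3 : ∀ t : ℝ, 0 < t → t ≤ 1 → ‖(t : ℂ) • H‖ < ρ₃ := by
      intro t ht ht1
      rw [norm_smul, Complex.norm_real, Real.norm_eq_abs, abs_of_pos ht]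
      nlinarith
    -- dsum value
    have hdsmem : (⟨m + m, dSum x y⟩ : MSpace d) ∈ Ω₁ := by
      have := memB x 0 y hx' (by simpa using hρ) hy'
      rwa [Tblk_zero] at this
    have hds : f (m + m) (dSum x y) = blk (f m x) 0 0 (f m y) :=
      hfnc.dsum_eq x y (hsub (memA x hx')) (hsub (memA y hy')) (hsub hdsmem)
    -- e21 vanishes
    have he21 : e21 M = 0 := by
      apply eq_zero_of_norm_le_mul (C := cE2 * K)
      intro t ht ht1
      have hval := hsc t ht ht1
      have ht0 : (t : ℂ) ≠ 0 := by exact_mod_cast ht.ne'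
      have : e21 M = (t : ℂ) • e21 (f (m + m) (Tblk x ((t : ℂ) • H) y)) := by
        rw [hval, e21_blk, smul_smul, mul_inv_cancel₀ ht0, one_smul]
      rw [this, norm_smul, Complex.norm_real, Real.norm_eq_abs, abs_of_pos ht]
      have hmem := memB x ((t : ℂ) • H) y hx' (by
        rw [norm_smul, Complex.norm_real, Real.norm_eq_abs, abs_of_pos ht]; nlinarith) hy'
      have hKb := hK ⟨m + m, Tblk x ((t : ℂ) • H) y⟩ hmem
      have : ‖e21 (f (m + m) (Tblk x ((t : ℂ) • H) y))‖ ≤ cE2 * K := by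
        calc ‖e21 (f (m + m) (Tblk x ((t : ℂ) • H) y))‖
            ≤ cE2 * ‖f (m + m) (Tblk x ((t : ℂ) • H) y)‖ := hcE2b _
          _ ≤ cE2 * K := mul_le_mul_of_nonneg_left hKb hcE20
      rw [mul_comm (cE2 * K) t]
      exact mul_le_mul_of_nonneg_left this (le_of_lt ht)
    -- e11 is f x
    have he11 : e11 M = f m x := by
      have : e11 M - f m x = 0 := by
        apply eq_zero_of_norm_le_mul (C := cE1 * L₂ * (cT * ‖H‖))
        intro t ht ht1
        have hval := hsc t ht ht1
        have h1 : e11 (f (m + m) (Tblk x ((t : ℂ) • H) y)) = e11 M := by rw [hval, e11_blk]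
        have h2 : e11 (f (m + m) (dSum x y)) = f m x := by rw [hds, e11_blk]
        have hdiffn : ‖e11 M - f m x‖
            ≤ cE1 * ‖f (m + m) (Tblk x ((t : ℂ) • H) y) - f (m + m) (dSum x y)‖ := by
          rw [← h1, ← h2]
          exact hcE1b _ _
        have hlipapp : ‖f (m + m) (Tblk x ((t : ℂ) • H) y) - f (m + m) (dSum x y)‖
            ≤ L₂ * ‖Tblk x ((t : ℂ) • H) y - dSum x y‖ := by
          apply lip₂
          · exact hTd x ((t : ℂ) • H) y hx (htH3 t ht ht1) hy
          · rw [← Tblk_zero]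
            exact hTd x 0 y hx (by simpa using hρ₃) hy
        have hdist : ‖Tblk x ((t : ℂ) • H) y - dSum x y‖ ≤ cT * (t * ‖H‖) := by
          have heq : Tblk x ((t : ℂ) • H) y - dSum x y = Tblk 0 ((t : ℂ) • H) 0 := by
            rw [← Tblk_zero, Tblk_sub]
            simp
          rw [heq]
          have hsm : ‖(t : ℂ) • H‖ = t * ‖H‖ := by
            rw [norm_smul, Complex.norm_real, Real.norm_eq_abs, abs_of_pos ht]
          calc ‖Tblk (0 : MatTup d m) ((t : ℂ) • H) 0‖
              ≤ cT * max ‖(0 : MatTup d m)‖ (max ‖(t : ℂ) • H‖ ‖(0 : MatTup d m)‖) := by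
                exact hcTb _ _ _
            _ = cT * (t * ‖H‖) := by
                rw [norm_zero, max_eq_left (norm_nonneg _), max_eq_right (norm_nonneg _), hsm]
        calc ‖e11 M - f m x‖
            ≤ cE1 * (L₂ * (cT * (t * ‖H‖))) := by
              have := le_trans hdiffn (mul_le_mul_of_nonneg_left
                (le_trans hlipapp (mul_le_mul_of_nonneg_left hdist hL₂)) hcE10)
              linarith [this]
          _ = cE1 * L₂ * (cT * ‖H‖) * t := by ring
      have := sub_eq_zero.mp this
      exact this
    -- e22 is f y
    have he22 : e22 M = f m y := by
      have : e22 M - f m y = 0 := by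
        apply eq_zero_of_norm_le_mul (C := cE3 * L₂ * (cT * ‖H‖))
        intro t ht ht1
        have hval := hsc t ht ht1
        have h1 : e22 (f (m + m) (Tblk x ((t : ℂ) • H) y)) = e22 M := by rw [hval, e22_blk]
        have h2 : e22 (f (m + m) (dSum x y)) = f m y := by rw [hds, e22_blk]
        have hdiffn : ‖e22 M - f m y‖
            ≤ cE3 * ‖f (m + m) (Tblk x ((t : ℂ) • H) y) - f (m + m) (dSum x y)‖ := by
          rw [← h1, ← h2]
          exact hcE3b _ _
        have hlipapp : ‖f (m + m) (Tblk x ((t : ℂ) • H) y) - f (m + m) (dSum x y)‖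
            ≤ L₂ * ‖Tblk x ((t : ℂ) • H) y - dSum x y‖ := by
          apply lip₂
          · exact hTd x ((t : ℂ) • H) y hx (htH3 t ht ht1) hy
          · rw [← Tblk_zero]
            exact hTd x 0 y hx (by simpa using hρ₃) hy
        have hdist : ‖Tblk x ((t : ℂ) • H) y - dSum x y‖ ≤ cT * (t * ‖H‖) := by
          have heq : Tblk x ((t : ℂ) • H) y - dSum x y = Tblk 0 ((t : ℂ) • H) 0 := by
            rw [← Tblk_zero, Tblk_sub]
            simp
          rw [heq]
          have hsm : ‖(t : ℂ) • H‖ = t * ‖H‖ := by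
            rw [norm_smul, Complex.norm_real, Real.norm_eq_abs, abs_of_pos ht]
          calc ‖Tblk (0 : MatTup d m) ((t : ℂ) • H) 0‖
              ≤ cT * max ‖(0 : MatTup d m)‖ (max ‖(t : ℂ) • H‖ ‖(0 : MatTup d m)‖) := by
                exact hcTb _ _ _
            _ = cT * (t * ‖H‖) := by
                rw [norm_zero, max_eq_left (norm_nonneg _), max_eq_right (norm_nonneg _), hsm]
        calc ‖e22 M - f m y‖
            ≤ cE3 * (L₂ * (cT * (t * ‖H‖))) := by
              have := le_trans hdiffn (mul_le_mul_of_nonneg_left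
                (le_trans hlipapp (mul_le_mul_of_nonneg_left hdist hL₂)) hcE30)
              linarith [this]
          _ = cE3 * L₂ * (cT * ‖H‖) * t := by ring
      exact sub_eq_zero.mp this
    conv_lhs => rw [← blk_eq M]
    rw [he11, he21, he22]
  -- notation: Q x G is the candidate derivative
  set Q : MatTup d m → MatTup d m → Mat m :=
    fun x G => e12 (f (m + m) (Tblk x G x)) with hQdef
  have hQ0 : ∀ x : MatTup d m, ‖x - b‖ < ρ₃ → Q x 0 = 0 := by
    intro x hx
    have hx' : ‖x - b‖ < ρ := by linarith
    have hdsmem : (⟨m + m, dSum x x⟩ : MSpace d) ∈ Ω₁ := by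
      have := memB x 0 x hx' (by simpa using hρ) hx'
      rwa [Tblk_zero] at this
    have hds : f (m + m) (dSum x x) = blk (f m x) 0 0 (f m x) :=
      hfnc.dsum_eq x x (hsub (memA x hx')) (hsub (memA x hx')) (hsub hdsmem)
    simp only [hQdef]
    rw [Tblk_zero, hds, e12_blk]
  obtain ⟨C, hC0, hCeq⟩ : ∃ C : ℝ, 0 ≤ C ∧ C = 2 * cE * L₂ * cT / ρ₃ :=
    ⟨2 * cE * L₂ * cT / ρ₃,
      div_nonneg (mul_nonneg (mul_nonneg (mul_nonneg (by norm_num) hcE0) hL₂) hcT0) hρ₃.le,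
      rfl⟩
  have hsmnorm : ∀ (t : ℝ), 0 < t → ∀ G : MatTup d m, ‖(t : ℂ) • G‖ = t * ‖G‖ := by
    intro t ht G
    rw [norm_smul, Complex.norm_real, Real.norm_eq_abs, abs_of_pos ht]
  -- the quadratic estimate
  have quad : ∀ x H : MatTup d m, ‖x - b‖ < ρ₃ / 4 → ‖H‖ < ρ₃ / 4 →
      ‖f m (x + H) - f m x - Q x H‖ ≤ C * (‖H‖ * ‖H‖) := by
    intro x H hx hH
    by_cases h0 : H = 0
    · subst h0
      rw [hQ0 x (by linarith)]
      simp
    · have hHpos : 0 < ‖H‖ := norm_pos_iff.mpr h0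
      have hxH : ‖x + H - b‖ < ρ₃ / 2 := by
        have : x + H - b = (x - b) + H := by abel
        rw [this]
        have := norm_add_le (x - b) H
        linarith
      have hx3 : ‖x - b‖ < ρ₃ := by linarith
      have hxρ : ‖x - b‖ < ρ := by linarith
      have hxHρ : ‖x + H - b‖ < ρ := by linarith
      have hHρ : ‖H‖ < ρ := by linarith
      -- difference identity
      have hd := diffid (x + H) x (by linarith) (by linarith)
      rw [show x + H - x = H by abel] at hd
      have hs3 : f m (x + H) - f m x = e12 (f (m + m) (Tblk (x + H) H x)) := by
        rw [hd, e12_blk]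
      set t : ℝ := ρ₃ / (2 * ‖H‖) with htdef
      have htpos : 0 < t := by positivity
      have ht0 : (t : ℂ) ≠ 0 := by exact_mod_cast htpos.ne'
      have htH : ‖(t : ℂ) • H‖ = ρ₃ / 2 := by
        rw [hsmnorm t htpos H, htdef]
        field_simp
      have htHρ : ‖(t : ℂ) • H‖ < ρ := by rw [htH]; linarith
      have htH3 : ‖(t : ℂ) • H‖ < ρ₃ := by rw [htH]; linarith
      have hA := scal (x + H) H x hxHρ hHρ hxρ (t : ℂ) ht0 htHρ
      have hB := scal x H x hxρ hHρ hxρ (t : ℂ) ht0 htHρ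
      have hA12 : e12 (f (m + m) (Tblk (x + H) ((t : ℂ) • H) x))
          = (t : ℂ) • e12 (f (m + m) (Tblk (x + H) H x)) := by rw [hA, e12_blk]
      have hB12 : e12 (f (m + m) (Tblk x ((t : ℂ) • H) x))
          = (t : ℂ) • e12 (f (m + m) (Tblk x H x)) := by rw [hB, e12_blk]
      have hkey : e12 (f (m + m) (Tblk (x + H) H x)) - e12 (f (m + m) (Tblk x H x))
          = (t : ℂ)⁻¹ • (e12 (f (m + m) (Tblk (x + H) ((t : ℂ) • H) x))
              - e12 (f (m + m) (Tblk x ((t : ℂ) • H) x))) := by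
        rw [hA12, hB12, smul_sub, smul_smul, smul_smul, inv_mul_cancel₀ ht0, one_smul, one_smul]
      have hlipb : ‖e12 (f (m + m) (Tblk (x + H) ((t : ℂ) • H) x))
          - e12 (f (m + m) (Tblk x ((t : ℂ) • H) x))‖ ≤ cE * (L₂ * (cT * ‖H‖)) := by
        have h1 : ‖e12 (f (m + m) (Tblk (x + H) ((t : ℂ) • H) x))
            - e12 (f (m + m) (Tblk x ((t : ℂ) • H) x))‖
            ≤ cE * ‖f (m + m) (Tblk (x + H) ((t : ℂ) • H) x)
                - f (m + m) (Tblk x ((t : ℂ) • H) x)‖ := by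
          exact hcEb _ _
        have h2 : ‖f (m + m) (Tblk (x + H) ((t : ℂ) • H) x)
            - f (m + m) (Tblk x ((t : ℂ) • H) x)‖
            ≤ L₂ * ‖Tblk (x + H) ((t : ℂ) • H) x - Tblk x ((t : ℂ) • H) x‖ := by
          apply lip₂
          · exact hTd (x + H) ((t : ℂ) • H) x (by linarith) htH3 hx3
          · exact hTd x ((t : ℂ) • H) x hx3 htH3 hx3
        have h3 : ‖Tblk (x + H) ((t : ℂ) • H) x - Tblk x ((t : ℂ) • H) x‖ ≤ cT * ‖H‖ := by
          rw [Tblk_sub, show x + H - x = H by abel, sub_self, sub_self]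
          calc ‖Tblk H (0 : MatTup d m) 0‖
              ≤ cT * max ‖H‖ (max ‖(0 : MatTup d m)‖ ‖(0 : MatTup d m)‖) := by
                exact hcTb _ _ _
            _ = cT * ‖H‖ := by
                rw [norm_zero, max_self, max_eq_left (norm_nonneg _)]
        calc ‖e12 (f (m + m) (Tblk (x + H) ((t : ℂ) • H) x))
            - e12 (f (m + m) (Tblk x ((t : ℂ) • H) x))‖
            ≤ cE * (L₂ * ‖Tblk (x + H) ((t : ℂ) • H) x - Tblk x ((t : ℂ) • H) x‖) :=
              le_trans h1 (mul_le_mul_of_nonneg_left h2 hcE0)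
          _ ≤ cE * (L₂ * (cT * ‖H‖)) := by
              apply mul_le_mul_of_nonneg_left _ hcE0
              exact mul_le_mul_of_nonneg_left h3 hL₂
      have hfinal : ‖f m (x + H) - f m x - Q x H‖
          ≤ t⁻¹ * (cE * (L₂ * (cT * ‖H‖))) := by
        simp only [hQdef]
        rw [hs3, hkey, norm_smul]
        rw [show ‖((t : ℂ)⁻¹)‖ = t⁻¹ by
          rw [norm_inv, Complex.norm_real, Real.norm_eq_abs, abs_of_pos htpos]]
        exact mul_le_mul_of_nonneg_left hlipb (by positivity)
      have htinv : t⁻¹ = 2 * ‖H‖ / ρ₃ := by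
        rw [htdef, inv_div]
      rw [htinv] at hfinal
      calc ‖f m (x + H) - f m x - Q x H‖
          ≤ 2 * ‖H‖ / ρ₃ * (cE * (L₂ * (cT * ‖H‖))) := hfinal
        _ = C * (‖H‖ * ‖H‖) := by rw [hCeq]; field_simp
  -- the mixed ("bracket") estimate
  have brk : ∀ x G₁ G₂ : MatTup d m, ‖x - b‖ < ρ₃ / 8 → ‖G₁‖ < ρ₃ / 8 → ‖G₂‖ < ρ₃ / 8 →
      ‖(f m (x + G₁ + G₂) - f m (x + G₁)) - (f m (x + G₂) - f m x)‖
        ≤ C * (‖G₁‖ * ‖G₂‖) := by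
    intro x G₁ G₂ hx h1 h2
    by_cases h0 : G₂ = 0
    · subst h0
      simp
    · have hG2pos : 0 < ‖G₂‖ := norm_pos_iff.mpr h0
      have hx1 : ‖x + G₁ - b‖ < ρ₃ / 4 := by
        rw [show x + G₁ - b = (x - b) + G₁ by abel]
        have := norm_add_le (x - b) G₁
        linarith
      have hx12 : ‖x + G₁ + G₂ - b‖ < ρ₃ / 2 := by
        rw [show x + G₁ + G₂ - b = ((x - b) + G₁) + G₂ by abel]
        have ha := norm_add_le ((x - b) + G₁) G₂
        have hb2 := norm_add_le (x - b) G₁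
        linarith
      have hx2 : ‖x + G₂ - b‖ < ρ₃ / 4 := by
        rw [show x + G₂ - b = (x - b) + G₂ by abel]
        have := norm_add_le (x - b) G₂
        linarith
      have hd1 := diffid (x + G₁ + G₂) (x + G₁) (by linarith) (by linarith)
      rw [show x + G₁ + G₂ - (x + G₁) = G₂ by abel] at hd1
      have hd2 := diffid (x + G₂) x (by linarith) (by linarith)
      rw [show x + G₂ - x = G₂ by abel] at hd2
      have hs1 : f m (x + G₁ + G₂) - f m (x + G₁)
          = e12 (f (m + m) (Tblk (x + G₁ + G₂) G₂ (x + G₁))) := by rw [hd1, e12_blk]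
      have hs2 : f m (x + G₂) - f m x
          = e12 (f (m + m) (Tblk (x + G₂) G₂ x)) := by rw [hd2, e12_blk]
      set t : ℝ := ρ₃ / (2 * ‖G₂‖) with htdef
      have htpos : 0 < t := by positivity
      have ht0 : (t : ℂ) ≠ 0 := by exact_mod_cast htpos.ne'
      have htG : ‖(t : ℂ) • G₂‖ = ρ₃ / 2 := by
        rw [hsmnorm t htpos G₂, htdef]
        field_simp
      have htGρ : ‖(t : ℂ) • G₂‖ < ρ := by rw [htG]; linarith
      have htG3 : ‖(t : ℂ) • G₂‖ < ρ₃ := by rw [htG]; linarith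
      have hG2ρ : ‖G₂‖ < ρ := by linarith
      have hA := scal (x + G₁ + G₂) G₂ (x + G₁) (by linarith) hG2ρ (by linarith)
        (t : ℂ) ht0 htGρ
      have hB := scal (x + G₂) G₂ x (by linarith) hG2ρ (by linarith) (t : ℂ) ht0 htGρ
      have hA12 : e12 (f (m + m) (Tblk (x + G₁ + G₂) ((t : ℂ) • G₂) (x + G₁)))
          = (t : ℂ) • e12 (f (m + m) (Tblk (x + G₁ + G₂) G₂ (x + G₁))) := by
        rw [hA, e12_blk]
      have hB12 : e12 (f (m + m) (Tblk (x + G₂) ((t : ℂ) • G₂) x))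
          = (t : ℂ) • e12 (f (m + m) (Tblk (x + G₂) G₂ x)) := by rw [hB, e12_blk]
      have hkey : e12 (f (m + m) (Tblk (x + G₁ + G₂) G₂ (x + G₁)))
            - e12 (f (m + m) (Tblk (x + G₂) G₂ x))
          = (t : ℂ)⁻¹ • (e12 (f (m + m) (Tblk (x + G₁ + G₂) ((t : ℂ) • G₂) (x + G₁)))
              - e12 (f (m + m) (Tblk (x + G₂) ((t : ℂ) • G₂) x))) := by
        rw [hA12, hB12, smul_sub, smul_smul, smul_smul, inv_mul_cancel₀ ht0, one_smul, one_smul]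
      have hlipb : ‖e12 (f (m + m) (Tblk (x + G₁ + G₂) ((t : ℂ) • G₂) (x + G₁)))
          - e12 (f (m + m) (Tblk (x + G₂) ((t : ℂ) • G₂) x))‖
          ≤ cE * (L₂ * (cT * ‖G₁‖)) := by
        have hh1 : ‖e12 (f (m + m) (Tblk (x + G₁ + G₂) ((t : ℂ) • G₂) (x + G₁)))
            - e12 (f (m + m) (Tblk (x + G₂) ((t : ℂ) • G₂) x))‖
            ≤ cE * ‖f (m + m) (Tblk (x + G₁ + G₂) ((t : ℂ) • G₂) (x + G₁))
                - f (m + m) (Tblk (x + G₂) ((t : ℂ) • G₂) x)‖ := by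
          exact hcEb _ _
        have hh2 : ‖f (m + m) (Tblk (x + G₁ + G₂) ((t : ℂ) • G₂) (x + G₁))
            - f (m + m) (Tblk (x + G₂) ((t : ℂ) • G₂) x)‖
            ≤ L₂ * ‖Tblk (x + G₁ + G₂) ((t : ℂ) • G₂) (x + G₁)
                - Tblk (x + G₂) ((t : ℂ) • G₂) x‖ := by
          apply lip₂
          · exact hTd (x + G₁ + G₂) ((t : ℂ) • G₂) (x + G₁) (by linarith) htG3 (by linarith)
          · exact hTd (x + G₂) ((t : ℂ) • G₂) x (by linarith) htG3 (by linarith)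
        have hh3 : ‖Tblk (x + G₁ + G₂) ((t : ℂ) • G₂) (x + G₁)
            - Tblk (x + G₂) ((t : ℂ) • G₂) x‖ ≤ cT * ‖G₁‖ := by
          rw [Tblk_sub, show x + G₁ + G₂ - (x + G₂) = G₁ by abel, sub_self,
            show x + G₁ - x = G₁ by abel]
          calc ‖Tblk G₁ (0 : MatTup d m) G₁‖
              ≤ cT * max ‖G₁‖ (max ‖(0 : MatTup d m)‖ ‖G₁‖) := by
                exact hcTb _ _ _
            _ = cT * ‖G₁‖ := by
                rw [norm_zero, max_eq_right (norm_nonneg _), max_self]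
        calc ‖e12 (f (m + m) (Tblk (x + G₁ + G₂) ((t : ℂ) • G₂) (x + G₁)))
            - e12 (f (m + m) (Tblk (x + G₂) ((t : ℂ) • G₂) x))‖
            ≤ cE * (L₂ * ‖Tblk (x + G₁ + G₂) ((t : ℂ) • G₂) (x + G₁)
                - Tblk (x + G₂) ((t : ℂ) • G₂) x‖) :=
              le_trans hh1 (mul_le_mul_of_nonneg_left hh2 hcE0)
          _ ≤ cE * (L₂ * (cT * ‖G₁‖)) := by
              apply mul_le_mul_of_nonneg_left _ hcE0
              exact mul_le_mul_of_nonneg_left hh3 hL₂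
      have hfinal : ‖(f m (x + G₁ + G₂) - f m (x + G₁)) - (f m (x + G₂) - f m x)‖
          ≤ t⁻¹ * (cE * (L₂ * (cT * ‖G₁‖))) := by
        rw [hs1, hs2, hkey, norm_smul]
        rw [show ‖((t : ℂ)⁻¹)‖ = t⁻¹ by
          rw [norm_inv, Complex.norm_real, Real.norm_eq_abs, abs_of_pos htpos]]
        exact mul_le_mul_of_nonneg_left hlipb (by positivity)
      have htinv : t⁻¹ = 2 * ‖G₂‖ / ρ₃ := by rw [htdef, inv_div]
      rw [htinv] at hfinal
      calc ‖(f m (x + G₁ + G₂) - f m (x + G₁)) - (f m (x + G₂) - f m x)‖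
          ≤ 2 * ‖G₂‖ / ρ₃ * (cE * (L₂ * (cT * ‖G₁‖))) := hfinal
        _ = C * (‖G₁‖ * ‖G₂‖) := by rw [hCeq]; field_simp
  -- complex homogeneity
  have qhom : ∀ x : MatTup d m, ‖x - b‖ < ρ₃ → ∀ (c : ℂ) (G : MatTup d m), c ≠ 0 →
      ‖G‖ < ρ → ‖c • G‖ < ρ → Q x (c • G) = c • Q x G := by
    intro x hx c G hc hG hcG
    have hxρ : ‖x - b‖ < ρ := by linarith
    have := scal x G x hxρ hG hxρ c hc hcG
    simp only [hQdef]
    rw [this, e12_blk]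
  -- additivity on a small ball
  have addQ : ∀ x : MatTup d m, ‖x - b‖ < ρ₃ / 16 → ∀ G₁ G₂ : MatTup d m,
      ‖G₁‖ < ρ₃ / 16 → ‖G₂‖ < ρ₃ / 16 → Q x (G₁ + G₂) = Q x G₁ + Q x G₂ := by
    intro x hx G₁ G₂ h1 h2
    have hx3 : ‖x - b‖ < ρ₃ := by linarith
    have hsum : ‖G₁ + G₂‖ < ρ₃ / 8 := by
      have := norm_add_le G₁ G₂
      linarith
    have key : Q x (G₁ + G₂) - Q x G₁ - Q x G₂ = 0 := by
      apply eq_zero_of_norm_le_mul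
        (C := C * ((‖G₁‖ + ‖G₂‖) * (‖G₁‖ + ‖G₂‖)) + C * (‖G₁‖ * ‖G₁‖)
          + C * (‖G₂‖ * ‖G₂‖) + C * (‖G₁‖ * ‖G₂‖))
      intro t ht ht1
      have ht0 : (t : ℂ) ≠ 0 := by exact_mod_cast ht.ne'
      have hom : ∀ G : MatTup d m, ‖G‖ < ρ₃ / 4 → Q x ((t : ℂ) • G) = (t : ℂ) • Q x G := by
        intro G hG
        apply qhom x hx3 (t : ℂ) G ht0
        · linarith
        · rw [real_smul_norm ht]
          nlinarith
      have hn1 : ‖(t : ℂ) • G₁‖ < ρ₃ / 4 := by rw [real_smul_norm ht]; nlinarith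
      have hn2 : ‖(t : ℂ) • G₂‖ < ρ₃ / 4 := by rw [real_smul_norm ht]; nlinarith
      have hns : ‖(t : ℂ) • (G₁ + G₂)‖ < ρ₃ / 4 := by rw [real_smul_norm ht]; nlinarith
      have hx4 : ‖x - b‖ < ρ₃ / 4 := by linarith
      have q1 := quad x ((t : ℂ) • (G₁ + G₂)) hx4 hns
      have q2 := quad x ((t : ℂ) • G₁) hx4 hn1
      have q3 := quad x ((t : ℂ) • G₂) hx4 hn2
      have hbk := brk x ((t : ℂ) • G₁) ((t : ℂ) • G₂) (by linarith)
        (by rw [real_smul_norm ht]; nlinarith) (by rw [real_smul_norm ht]; nlinarith)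
      have hid : (t : ℂ) • (Q x (G₁ + G₂) - Q x G₁ - Q x G₂)
          = -(f m (x + (t : ℂ) • (G₁ + G₂)) - f m x - Q x ((t : ℂ) • (G₁ + G₂)))
            + (f m (x + (t : ℂ) • G₁) - f m x - Q x ((t : ℂ) • G₁))
            + (f m (x + (t : ℂ) • G₂) - f m x - Q x ((t : ℂ) • G₂))
            + ((f m (x + (t : ℂ) • G₁ + (t : ℂ) • G₂) - f m (x + (t : ℂ) • G₁))
              - (f m (x + (t : ℂ) • G₂) - f m x)) := by
        rw [hom (G₁ + G₂) (by linarith), hom G₁ (by linarith), hom G₂ (by linarith)]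
        rw [show x + (t : ℂ) • (G₁ + G₂) = x + (t : ℂ) • G₁ + (t : ℂ) • G₂ by
          rw [smul_add, add_assoc]]
        rw [smul_sub, smul_sub]
        abel
      have hnormid := congrArg (fun z => ‖z‖) hid
      rw [real_smul_norm ht] at hnormid
      -- bound the right hand side
      have hq1 : ‖f m (x + (t : ℂ) • (G₁ + G₂)) - f m x - Q x ((t : ℂ) • (G₁ + G₂))‖
          ≤ C * ((t * (‖G₁‖ + ‖G₂‖)) * (t * (‖G₁‖ + ‖G₂‖))) := by
        simp only [real_smul_norm ht] at q1
        have hGG := norm_add_le G₁ G₂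
        have h1 : t * ‖G₁ + G₂‖ ≤ t * (‖G₁‖ + ‖G₂‖) :=
          mul_le_mul_of_nonneg_left hGG ht.le
        have h0 : 0 ≤ t * ‖G₁ + G₂‖ := by positivity
        have hsq : (t * ‖G₁ + G₂‖) * (t * ‖G₁ + G₂‖)
            ≤ (t * (‖G₁‖ + ‖G₂‖)) * (t * (‖G₁‖ + ‖G₂‖)) :=
          mul_le_mul h1 h1 h0 (le_trans h0 h1)
        have := mul_le_mul_of_nonneg_left hsq hC0
        calc ‖f m (x + (t : ℂ) • (G₁ + G₂)) - f m x - Q x ((t : ℂ) • (G₁ + G₂))‖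
            ≤ C * ((t * ‖G₁ + G₂‖) * (t * ‖G₁ + G₂‖)) := by
              rw [← mul_assoc] at q1 ⊢
              exact q1
          _ ≤ C * ((t * (‖G₁‖ + ‖G₂‖)) * (t * (‖G₁‖ + ‖G₂‖))) := this
      simp only [real_smul_norm ht] at q2 q3 hbk
      set v := Q x (G₁ + G₂) - Q x G₁ - Q x G₂ with hvdef
      set A1 := f m (x + (t : ℂ) • (G₁ + G₂)) - f m x - Q x ((t : ℂ) • (G₁ + G₂)) with hA1
      set A2 := f m (x + (t : ℂ) • G₁) - f m x - Q x ((t : ℂ) • G₁) with hA2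
      set A3 := f m (x + (t : ℂ) • G₂) - f m x - Q x ((t : ℂ) • G₂) with hA3
      set A4 := (f m (x + (t : ℂ) • G₁ + (t : ℂ) • G₂) - f m (x + (t : ℂ) • G₁))
        - (f m (x + (t : ℂ) • G₂) - f m x) with hA4
      have hsum4 : ‖-A1 + A2 + A3 + A4‖ ≤ ‖A1‖ + ‖A2‖ + ‖A3‖ + ‖A4‖ := by
        have u1 := norm_add_le (-A1 + A2 + A3) A4
        have u2 := norm_add_le (-A1 + A2) A3
        have u3 := norm_add_le (-A1) A2
        rw [norm_neg] at u3
        linarith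
      have hineq : t * ‖v‖ ≤ ‖A1‖ + ‖A2‖ + ‖A3‖ + ‖A4‖ := by
        rw [← hnormid] at hsum4
        exact hsum4
      have hfin : t * ‖v‖
          ≤ (C * ((‖G₁‖ + ‖G₂‖) * (‖G₁‖ + ‖G₂‖)) + C * (‖G₁‖ * ‖G₁‖)
            + C * (‖G₂‖ * ‖G₂‖) + C * (‖G₁‖ * ‖G₂‖)) * (t * t) := by
        have e1 : C * ((t * (‖G₁‖ + ‖G₂‖)) * (t * (‖G₁‖ + ‖G₂‖)))
            = C * ((‖G₁‖ + ‖G₂‖) * (‖G₁‖ + ‖G₂‖)) * (t * t) := by ring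
        have e2 : C * ((t * ‖G₁‖) * (t * ‖G₁‖)) = C * (‖G₁‖ * ‖G₁‖) * (t * t) := by ring
        have e3 : C * ((t * ‖G₂‖) * (t * ‖G₂‖)) = C * (‖G₂‖ * ‖G₂‖) * (t * t) := by ring
        have e4 : C * ((t * ‖G₁‖) * (t * ‖G₂‖)) = C * (‖G₁‖ * ‖G₂‖) * (t * t) := by ring
        rw [e1] at hq1
        rw [e2] at q2
        rw [e3] at q3
        rw [e4] at hbk
        linarith
      exact (mul_le_mul_iff_right₀ ht).mp (by
        calc t * ‖v‖ ≤ (C * ((‖G₁‖ + ‖G₂‖) * (‖G₁‖ + ‖G₂‖)) + C * (‖G₁‖ * ‖G₁‖)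
            + C * (‖G₂‖ * ‖G₂‖) + C * (‖G₁‖ * ‖G₂‖)) * (t * t) := hfin
          _ = t * ((C * ((‖G₁‖ + ‖G₂‖) * (‖G₁‖ + ‖G₂‖)) + C * (‖G₁‖ * ‖G₁‖)
            + C * (‖G₂‖ * ‖G₂‖) + C * (‖G₁‖ * ‖G₂‖)) * t) := by ring)
    rw [sub_sub] at key
    have := sub_eq_zero.mp key
    exact this
  -- existence of the derivative
  have deriv : ∀ x : MatTup d m, ‖x - b‖ < ρ₃ / 16 →
      ∃ ψ : MatTup d m →L[ℂ] Mat m, HasFDerivAt (f m) ψ x ∧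
        ∀ H : MatTup d m, ‖H‖ < ρ₃ / 16 → ψ H = Q x H := by
    intro x hx
    have hx3 : ‖x - b‖ < ρ₃ := by linarith
    set σf : MatTup d m → ℝ := fun G => ρ₃ / 16 / (2 * (‖G‖ + 1)) with hσdef
    have hσpos : ∀ G : MatTup d m, 0 < σf G := by
      intro G
      simp only [hσdef]
      positivity
    have hσmul : ∀ G : MatTup d m, σf G * ‖G‖ < ρ₃ / 16 := by
      intro G
      have hg := norm_nonneg G
      simp only [hσdef]
      rw [div_mul_eq_mul_div, div_lt_iff₀ (by positivity)]
      nlinarith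
    have cons : ∀ G : MatTup d m, ∀ s : ℝ, 0 < s → s * ‖G‖ < ρ₃ / 16 →
        ((s : ℂ))⁻¹ • Q x ((s : ℂ) • G) = ((σf G : ℂ))⁻¹ • Q x ((σf G : ℂ) • G) := by
      intro G s hs hsG
      have hσG := hσpos G
      have hs0 : (s : ℂ) ≠ 0 := by exact_mod_cast hs.ne'
      have hσ0 : ((σf G : ℝ) : ℂ) ≠ 0 := by exact_mod_cast (hσpos G).ne'
      have harg : ((s / σf G : ℝ) : ℂ) • ((σf G : ℂ) • G) = (s : ℂ) • G := by
        rw [smul_smul]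
        congr 1
        push_cast
        field_simp
      have h1 : Q x ((s : ℂ) • G) = ((s / σf G : ℝ) : ℂ) • Q x ((σf G : ℂ) • G) := by
        have hc : ((s / σf G : ℝ) : ℂ) ≠ 0 := by
          have : (0 : ℝ) < s / σf G := div_pos hs hσG
          exact_mod_cast this.ne'
        rw [← harg]
        apply qhom x hx3 _ _ hc
        · rw [real_smul_norm hσG]
          have := hσmul G
          linarith
        · rw [harg, real_smul_norm hs]
          linarith
      rw [h1, smul_smul]
      congr 1
      push_cast
      field_simp
    set F : MatTup d m → Mat m := fun G => ((σf G : ℂ))⁻¹ • Q x ((σf G : ℂ) • G) with hFdef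
    have consF : ∀ G : MatTup d m, ∀ s : ℝ, 0 < s → s * ‖G‖ < ρ₃ / 16 →
        F G = ((s : ℂ))⁻¹ • Q x ((s : ℂ) • G) := by
      intro G s hs hsG
      simp only [hFdef]
      exact (cons G s hs hsG).symm
    have hFsmall : ∀ G : MatTup d m, ‖G‖ < ρ₃ / 16 → F G = Q x G := by
      intro G hG
      rw [consF G 1 one_pos (by rw [one_mul]; exact hG)]
      norm_num
    have Fadd : ∀ G₁ G₂ : MatTup d m, F (G₁ + G₂) = F G₁ + F G₂ := by
      intro G₁ G₂
      set s : ℝ := min (σf G₁) (min (σf G₂) (σf (G₁ + G₂))) with hsdef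
      have hs : 0 < s := lt_min (hσpos _) (lt_min (hσpos _) (hσpos _))
      have hs1 : s * ‖G₁‖ < ρ₃ / 16 :=
        lt_of_le_of_lt (mul_le_mul_of_nonneg_right (min_le_left _ _) (norm_nonneg _))
          (hσmul _)
      have hs2 : s * ‖G₂‖ < ρ₃ / 16 :=
        lt_of_le_of_lt (mul_le_mul_of_nonneg_right
          (le_trans (min_le_right _ _) (min_le_left _ _)) (norm_nonneg _)) (hσmul _)
      have hss : s * ‖G₁ + G₂‖ < ρ₃ / 16 :=
        lt_of_le_of_lt (mul_le_mul_of_nonneg_right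
          (le_trans (min_le_right _ _) (min_le_right _ _)) (norm_nonneg _)) (hσmul _)
      rw [consF (G₁ + G₂) s hs hss, consF G₁ s hs hs1, consF G₂ s hs hs2]
      rw [smul_add]
      rw [addQ x hx ((s : ℂ) • G₁) ((s : ℂ) • G₂)
        (by rw [real_smul_norm hs]; exact hs1) (by rw [real_smul_norm hs]; exact hs2)]
      rw [smul_add]
    have Fsmul : ∀ (c : ℂ) (G : MatTup d m), F (c • G) = c • F G := by
      intro c G
      by_cases hc : c = 0
      · subst hc
        rw [zero_smul, zero_smul]
        have h0 : F 0 = Q x 0 := hFsmall 0 (by rw [norm_zero]; positivity)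
        rw [h0, hQ0 x hx3]
      · set s : ℝ := min (σf G) (σf (c • G)) with hsdef
        have hs : 0 < s := lt_min (hσpos _) (hσpos _)
        have hsG : s * ‖G‖ < ρ₃ / 16 :=
          lt_of_le_of_lt (mul_le_mul_of_nonneg_right (min_le_left _ _) (norm_nonneg _))
            (hσmul _)
        have hscG : s * ‖c • G‖ < ρ₃ / 16 :=
          lt_of_le_of_lt (mul_le_mul_of_nonneg_right (min_le_right _ _) (norm_nonneg _))
            (hσmul _)
        have hρ₃ρbig : ρ₃ / 16 < ρ := by linarith
        have hn1 : ‖(s : ℂ) • G‖ < ρ := by rw [real_smul_norm hs]; linarith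
        have hswap : (s : ℂ) • (c • G) = c • ((s : ℂ) • G) := by
          rw [smul_smul, smul_smul, mul_comm]
        have hn2 : ‖c • ((s : ℂ) • G)‖ < ρ := by
          rw [← hswap, real_smul_norm hs]
          linarith
        rw [consF (c • G) s hs hscG, consF G s hs hsG]
        rw [hswap, qhom x hx3 c ((s : ℂ) • G) hc hn1 hn2]
        rw [smul_comm]
    refine ⟨LinearMap.toContinuousLinearMap
      { toFun := F, map_add' := Fadd, map_smul' := Fsmul }, ?_, ?_⟩
    · rw [hasFDerivAt_iff_isLittleO_nhds_zero, Asymptotics.isLittleO_iff]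
      intro c hc
      rw [Metric.eventually_nhds_iff]
      refine ⟨min (ρ₃ / 16) (c / (C + 1)), lt_min (by positivity) (by positivity), ?_⟩
      intro H hH
      rw [dist_zero_right] at hH
      have hH1 : ‖H‖ < ρ₃ / 16 := hH.trans_le (min_le_left _ _)
      have hH2 : ‖H‖ < c / (C + 1) := hH.trans_le (min_le_right _ _)
      have hψ : LinearMap.toContinuousLinearMap
          { toFun := F, map_add' := Fadd, map_smul' := Fsmul } H = Q x H := hFsmall H hH1
      rw [hψ]
      have hq := quad x H (by linarith) (by linarith)
      calc ‖f m (x + H) - f m x - Q x H‖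
          ≤ C * (‖H‖ * ‖H‖) := hq
        _ = (C * ‖H‖) * ‖H‖ := by ring
        _ ≤ c * ‖H‖ := by
            apply mul_le_mul_of_nonneg_right _ (norm_nonneg H)
            have h2 : C * (c / (C + 1)) ≤ c := by
              rw [mul_div_assoc', div_le_iff₀ (by positivity)]
              nlinarith
            have h1 : C * ‖H‖ ≤ C * (c / (C + 1)) :=
              mul_le_mul_of_nonneg_left hH2.le hC0
            linarith
    · intro H hH
      exact hFsmall H hH
  -- final packaging
  refine ⟨ρ₃ / 16, by positivity, ?_, ?_, ?_⟩
  · intro x H y hx hH hy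
    have hx3 : ‖x - b‖ < ρ₃ := by linarith
    have hH3 : ‖H‖ < ρ₃ := by linarith
    have hy3 : ‖y - b‖ < ρ₃ := by linarith
    refine ⟨memB x H y (by linarith) (by linarith) (by linarith), bf x H y hx3 hH3 hy3⟩
  · intro x hx
    obtain ⟨ψ, hψ, _⟩ := deriv x hx
    exact hψ.differentiableAt
  · intro x H hx hH
    obtain ⟨ψ, hψ, hval⟩ := deriv x hx
    rw [hψ.fderiv]
    have := hval H hH
    rw [this]



end NCAux
end

open NCAux

/-- For a fine holomorphic `f` on an nc domain `Ω` and `a ∈ Ω ∩ M_n^d`, for all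
sufficiently small `h, k` the `4 × 4` block upper triangular point built from
`a, h, k` lies in `Ω` and `f` of it is the corresponding block matrix involving
`f(a)`, `Df(a)[h]`, `Df(a)[k]`, and the Hessian `Hf(a)[h,k]`. -/
theorem fine_holo_hessian_block_formula (d n : ℕ) (Ω : Set (MSpace d))
    (hΩ : IsNCDomain Ω) (f : ∀ m, MatTup d m → Mat m) (hf : IsFineHolo Ω f)
    (a : MatTup d n) (ha : (⟨n, a⟩ : MSpace d) ∈ Ω) :
    ∃ ε : ℝ, 0 < ε ∧ ∀ h k : MatTup d n, ‖h‖ < ε → ‖k‖ < ε →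
      (⟨n + n + (n + n), fun r =>
          blk (blk (a r) (k r) 0 (a r)) (blk (h r) 0 0 (h r))
            0 (blk (a r) (k r) 0 (a r))⟩ : MSpace d) ∈ Ω ∧
      f (n + n + (n + n)) (fun r =>
          blk (blk (a r) (k r) 0 (a r)) (blk (h r) 0 0 (h r))
            0 (blk (a r) (k r) 0 (a r)))
        = blk (blk (f n a) (fderiv ℂ (f n) a k) 0 (f n a))
            (blk (fderiv ℂ (f n) a h) (ncHess f a h k) 0 (fderiv ℂ (f n) a h))
            0 (blk (f n a) (fderiv ℂ (f n) a k) 0 (f n a)) := by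
  obtain ⟨hfine, hfnc, hbd⟩ := hf
  obtain ⟨Ω₁, hΩ₁, haΩ₁, hsubΩ, K, hK⟩ := hbd ⟨n, a⟩ ha
  obtain ⟨σ₁, hσ₁, bf₁, diff₁, fd₁⟩ := mainR1 hfnc hΩ₁ hsubΩ hK haΩ₁
  obtain ⟨σ₂, hσ₂, bf₂, diff₂, fd₂⟩ := mainR1 hfnc hΩ₁ hsubΩ hK
    (hΩ₁.dsum_mem a a haΩ₁ haΩ₁)
  obtain ⟨cT, hcT0, hcTb⟩ : ∃ c : ℝ, 0 ≤ c ∧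
      ∀ u v w : MatTup d n, ‖Tblk u v w‖ ≤ c * max ‖u‖ (max ‖v‖ ‖w‖) :=
    ⟨‖TblkCLM d n‖, norm_nonneg (TblkCLM d n), fun u v w => Tblk_norm_le u v w⟩
  refine ⟨min σ₁ (σ₂ / (cT + 1)), lt_min hσ₁ (by positivity), ?_⟩
  intro h k hh hk
  have hh1 : ‖h‖ < σ₁ := hh.trans_le (min_le_left _ _)
  have hk1 : ‖k‖ < σ₁ := hk.trans_le (min_le_left _ _)
  have hh2 : ‖h‖ < σ₂ / (cT + 1) := hh.trans_le (min_le_right _ _)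
  have hk2 : ‖k‖ < σ₂ / (cT + 1) := hk.trans_le (min_le_right _ _)
  have haa : ‖a - a‖ < σ₁ := by rw [sub_self, norm_zero]; exact hσ₁
  have hdiv : (cT + 1) * (σ₂ / (cT + 1)) = σ₂ := by field_simp
  have hcTk : cT * ‖k‖ < σ₂ := by
    have h1 : cT * ‖k‖ ≤ (cT + 1) * ‖k‖ := by nlinarith [norm_nonneg k]
    have h2 : (cT + 1) * ‖k‖ < (cT + 1) * (σ₂ / (cT + 1)) :=
      mul_lt_mul_of_pos_left hk2 (by positivity)
    linarith
  have hcTh : cT * ‖h‖ < σ₂ := by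
    have h1 : cT * ‖h‖ ≤ (cT + 1) * ‖h‖ := by nlinarith [norm_nonneg h]
    have h2 : (cT + 1) * ‖h‖ < (cT + 1) * (σ₂ / (cT + 1)) :=
      mul_lt_mul_of_pos_left hh2 (by positivity)
    linarith
  have hoffk : ‖Tblk (0 : MatTup d n) k 0‖ ≤ cT * ‖k‖ := by
    have := hcTb 0 k 0
    rwa [norm_zero, max_eq_left (norm_nonneg _), max_eq_right (norm_nonneg _)] at this
  have hoffh : ‖Tblk (0 : MatTup d n) h 0‖ ≤ cT * ‖h‖ := by
    have := hcTb 0 h 0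
    rwa [norm_zero, max_eq_left (norm_nonneg _), max_eq_right (norm_nonneg _)] at this
  have hXknorm : ‖Tblk a k a - dSum a a‖ < σ₂ := by
    rw [← Tblk_zero, Tblk_sub, sub_self, sub_zero]
    linarith
  have hXhnorm : ‖Tblk a h a - dSum a a‖ < σ₂ := by
    rw [← Tblk_zero, Tblk_sub, sub_self, sub_zero]
    linarith
  have hHdnorm : ‖dSum h h‖ < σ₂ := by
    rw [← Tblk_zero]
    have := hcTb h 0 h
    rw [norm_zero, max_eq_right (norm_nonneg h), max_self] at this
    linarith
  have hKdnorm : ‖dSum k k‖ < σ₂ := by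
    rw [← Tblk_zero]
    have := hcTb k 0 k
    rw [norm_zero, max_eq_right (norm_nonneg k), max_self] at this
    linarith
  -- level n block formulas
  have hfk := bf₁ a k a haa hk1 haa
  have hfh := bf₁ a h a haa hh1 haa
  have hDK := fd₁ a k haa hk1
  have hDH := fd₁ a h haa hh1
  have hf2k : f (n + n) (Tblk a k a)
      = blk (f n a) (fderiv ℂ (f n) a k) 0 (f n a) := by rw [hfk.2, ← hDK]
  have hf2h : f (n + n) (Tblk a h a)
      = blk (f n a) (fderiv ℂ (f n) a h) 0 (f n a) := by rw [hfh.2, ← hDH]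
  -- level 2n block formulas
  have hbfW₁ := bf₂ (Tblk a k a) (dSum h h) (Tblk a k a) hXknorm hHdnorm hXknorm
  have hbfW₂ := bf₂ (Tblk a h a) (dSum k k) (Tblk a h a) hXhnorm hKdnorm hXhnorm
  -- Hessian identification
  have hev : (fun x : MatTup d n => fderiv ℂ (f n) x h)
      =ᶠ[nhds a] (fun x : MatTup d n => e12CLM n n (f (n + n) (Tblk x h x))) := by
    rw [Filter.eventuallyEq_iff_exists_mem]
    refine ⟨Metric.ball a σ₁, Metric.ball_mem_nhds a hσ₁, ?_⟩
    intro x hx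
    rw [Metric.mem_ball, dist_eq_norm] at hx
    show fderiv ℂ (f n) x h = e12CLM n n (f (n + n) (Tblk x h x))
    rw [fd₁ x h hx hh1]
    simp
  set Tdiag : MatTup d n →L[ℂ] MatTup d (n + n) :=
    (TblkCLM d n).comp ((ContinuousLinearMap.id ℂ (MatTup d n)).prod
      ((0 : MatTup d n →L[ℂ] MatTup d n).prod (ContinuousLinearMap.id ℂ (MatTup d n))))
    with hTdiagdef
  have hTdiagapp : ∀ x : MatTup d n, Tdiag x = Tblk x 0 x := fun _ => rfl
  have hφeq : (fun x : MatTup d n => Tblk x h x)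
      = fun x : MatTup d n => Tdiag x + Tblk 0 h 0 := by
    funext x
    rw [hTdiagapp]
    funext r
    show blk (x r) (h r) 0 (x r) = blk (x r) 0 0 (x r) + blk 0 (h r) 0 0
    rw [blk_add]
    simp
  have hφ : HasFDerivAt (fun x : MatTup d n => Tblk x h x) Tdiag a := by
    rw [hφeq]
    exact (Tdiag.hasFDerivAt).add_const _
  have hf2diff : HasFDerivAt (f (n + n)) (fderiv ℂ (f (n + n)) (Tblk a h a)) (Tblk a h a) :=
    (diff₂ (Tblk a h a) hXhnorm).hasFDerivAt
  have hcomp1 : HasFDerivAt (fun x : MatTup d n => f (n + n) (Tblk x h x))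
      ((fderiv ℂ (f (n + n)) (Tblk a h a)).comp Tdiag) a :=
    HasFDerivAt.comp a hf2diff hφ
  have hcomp2 : HasFDerivAt
      (fun x : MatTup d n => e12CLM n n (f (n + n) (Tblk x h x)))
      ((e12CLM n n).comp ((fderiv ℂ (f (n + n)) (Tblk a h a)).comp Tdiag)) a :=
    (e12CLM n n).hasFDerivAt.comp a hcomp1
  have hHess : ncHess f a h k
      = e12 (fderiv ℂ (f (n + n)) (Tblk a h a) (dSum k k)) := by
    calc ncHess f a h k
        = fderiv ℂ (fun x : MatTup d n => fderiv ℂ (f n) x h) a k := rfl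
      _ = fderiv ℂ (fun x : MatTup d n => e12CLM n n (f (n + n) (Tblk x h x))) a k := by
          rw [hev.fderiv_eq]
      _ = ((e12CLM n n).comp ((fderiv ℂ (f (n + n)) (Tblk a h a)).comp Tdiag)) k := by
          rw [hcomp2.fderiv]
      _ = e12 (fderiv ℂ (f (n + n)) (Tblk a h a) (dSum k k)) := rfl
  have hG'fd := fd₂ (Tblk a h a) (dSum k k) hXhnorm hKdnorm
  -- the permutation similarity
  have hsimW : simConj (uSwap n) (Tblk (Tblk a k a) (dSum h h) (Tblk a k a))
      = Tblk (Tblk a h a) (dSum k k) (Tblk a h a) := by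
    funext r
    show (uSwap n)⁻¹ * (blk (blk (a r) (k r) 0 (a r)) (blk (h r) 0 0 (h r)) 0
        (blk (a r) (k r) 0 (a r))) * uSwap n
      = blk (blk (a r) (h r) 0 (a r)) (blk (k r) 0 0 (k r)) 0 (blk (a r) (h r) 0 (a r))
    rw [uSwap_inv]
    rw [show (0 : Matrix (Fin (n + n)) (Fin (n + n)) ℂ) = blk 0 0 0 0 from blk_zero.symm]
    rw [uSwap_conj]
  have hW₁mem := hbfW₁.1
  have hW₂mem := hbfW₂.1
  have hsimval := hfnc.sim_eq (uSwap n) (Tblk (Tblk a k a) (dSum h h) (Tblk a k a))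
    (uSwap_isUnit n) (hsubΩ hW₁mem) (by rw [hsimW]; exact hsubΩ hW₂mem)
  rw [hsimW, uSwap_inv] at hsimval
  -- decompose the two unknown blocks
  obtain ⟨g11, g12, g21, g22, hG⟩ :
      ∃ A B C D, e12 (f (n + n + (n + n)) (Tblk (Tblk a k a) (dSum h h) (Tblk a k a)))
        = blk A B C D := ⟨_, _, _, _, (blk_eq _).symm⟩
  obtain ⟨g11', g12', g21', g22', hG'⟩ :
      ∃ A B C D, e12 (f (n + n + (n + n)) (Tblk (Tblk a h a) (dSum k k) (Tblk a h a)))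
        = blk A B C D := ⟨_, _, _, _, (blk_eq _).symm⟩
  rw [hbfW₁.2, hbfW₂.2, hf2k, hf2h, hG, hG'] at hsimval
  rw [show (0 : Matrix (Fin (n + n)) (Fin (n + n)) ℂ) = blk 0 0 0 0 from blk_zero.symm]
    at hsimval
  rw [uSwap_conj] at hsimval
  obtain ⟨o11, o12, o21, o22⟩ := blk_inj hsimval
  have hg11 : g11 = fderiv ℂ (f n) a h := ((blk_inj o11).2.1).symm
  have hg21 : g21 = 0 := ((blk_inj o21).2.1).symm
  have hg22 : g22 = fderiv ℂ (f n) a h := ((blk_inj o22).2.1).symm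
  have hg12 : g12 = ncHess f a h k := by
    rw [hHess, hG'fd, hG', e12_blk]
    exact ((blk_inj o12).2.1).symm
  refine ⟨hsubΩ hW₁mem, ?_⟩
  show f (n + n + (n + n)) (Tblk (Tblk a k a) (dSum h h) (Tblk a k a))
    = blk (blk (f n a) (fderiv ℂ (f n) a k) 0 (f n a))
        (blk (fderiv ℂ (f n) a h) (ncHess f a h k) 0 (fderiv ℂ (f n) a h))
        0 (blk (f n a) (fderiv ℂ (f n) a k) 0 (f n a))
  rw [hbfW₁.2, hf2k, hG, hg11, hg21, hg22, hg12]
end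

section
/- Let L : M_n^d → M_n be a linear map that has a right inverse R (i.e. L∘R = id on M_n). Then for every k ≥ 1 the ampliation L_k = id_k ⊗ L : M_{kn}^d → M_{kn} has a right inverse of operator norm at most n‖R‖. Consequently L is completely nonsingular and c(L) ≥ 1/(n‖R‖). -/
open Matrix Filter Topology
open scoped Matrix.Norms.L2Operator Kronecker

noncomputable section RightInverseAux

open Matrix
open scoped Matrix.Norms.L2Operator

private lemma euclid_normSq {m : ℕ} (y : EuclideanSpace ℂ (Fin m)) :
    ‖y‖ ^ 2 = ∑ i, ‖y i‖ ^ 2 := by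
  rw [EuclideanSpace.norm_eq, Real.sq_sqrt (by positivity)]

private lemma opNorm_le_bound' {m n : ℕ} (A : Matrix (Fin m) (Fin n) ℂ) {C : ℝ} (hC : 0 ≤ C)
    (h : ∀ x : Fin n → ℂ, ∑ i, ‖(A *ᵥ x) i‖ ^ 2 ≤ C ^ 2 * ∑ j, ‖x j‖ ^ 2) : ‖A‖ ≤ C := by
  rw [Matrix.l2_opNorm_def]
  refine ContinuousLinearMap.opNorm_le_bound _ hC fun x => ?_
  refine le_of_pow_le_pow_left₀ two_ne_zero (by positivity) ?_
  rw [mul_pow, euclid_normSq, euclid_normSq]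
  exact h (fun j => x j)

private def Vmat (k n : ℕ) (ξ : Fin k → ℂ) : Matrix (Fin (k * n)) (Fin n) ℂ :=
  Matrix.of fun p t => ξ (finProdFinEquiv.symm p).1 *
    (if (finProdFinEquiv.symm p).2 = t then 1 else 0)

private lemma Vmat_mulVec (k n : ℕ) (ξ : Fin k → ℂ) (x : Fin n → ℂ) (p : Fin (k * n)) :
    (Vmat k n ξ *ᵥ x) p = ξ (finProdFinEquiv.symm p).1 * x (finProdFinEquiv.symm p).2 := by
  simp only [Vmat, Matrix.mulVec, dotProduct, Matrix.of_apply]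
  rw [Finset.sum_eq_single (finProdFinEquiv.symm p).2]
  · rw [if_pos rfl, mul_one]
  · intro t _ ht; rw [if_neg (Ne.symm ht)]; ring
  · intro h; exact absurd (Finset.mem_univ _) h

private lemma Vmat_norm_le {k n : ℕ} (ξ : EuclideanSpace ℂ (Fin k)) :
    ‖Vmat k n (fun i => ξ i)‖ ≤ ‖ξ‖ := by
  refine opNorm_le_bound' _ (norm_nonneg ξ) fun x => ?_
  have : ∀ p : Fin (k * n), ‖(Vmat k n (fun i => ξ i) *ᵥ x) p‖ ^ 2
      = ‖ξ (finProdFinEquiv.symm p).1‖ ^ 2 * ‖x (finProdFinEquiv.symm p).2‖ ^ 2 := by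
    intro p; rw [Vmat_mulVec]; rw [norm_mul, mul_pow]
  simp only [this]
  rw [← Fintype.sum_equiv (finProdFinEquiv : Fin k × Fin n ≃ Fin (k * n))
    (fun z => ‖ξ z.1‖ ^ 2 * ‖x z.2‖ ^ 2)
    (fun p => ‖ξ (finProdFinEquiv.symm p).1‖ ^ 2 * ‖x (finProdFinEquiv.symm p).2‖ ^ 2)
    (fun z => by beta_reduce; rw [Equiv.symm_apply_apply])]
  rw [Fintype.sum_prod_type, euclid_normSq]
  have hms : (∑ i : Fin k, ‖ξ i‖ ^ 2) * ∑ j : Fin n, ‖x j‖ ^ 2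
      = ∑ i : Fin k, ∑ j : Fin n, ‖ξ i‖ ^ 2 * ‖x j‖ ^ 2 := by
    rw [Finset.sum_mul_sum]
  rw [hms]

private lemma Vmat_apply (k n : ℕ) (ξ : Fin k → ℂ) (i : Fin k) (s t : Fin n) :
    Vmat k n ξ (finProdFinEquiv (i, s)) t = ξ i * (if s = t then 1 else 0) := by
  unfold Vmat
  rw [Matrix.of_apply, Equiv.symm_apply_apply]

private def subBlock {k n : ℕ} (Y : Matrix (Fin (k * n)) (Fin (k * n)) ℂ) (i j : Fin k) :
    Matrix (Fin n) (Fin n) ℂ :=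
  Matrix.of fun s t => Y (finProdFinEquiv (i, s)) (finProdFinEquiv (j, t))

private lemma sandwich_eq {k n : ℕ} (Y : Matrix (Fin (k * n)) (Fin (k * n)) ℂ)
    (η ξ : Fin k → ℂ) :
    (Vmat k n η)ᴴ * Y * Vmat k n ξ
      = ∑ i : Fin k, ∑ j : Fin k, ((starRingEnd ℂ) (η i) * ξ j) • subBlock Y i j := by
  ext s t
  rw [Matrix.mul_apply]
  rw [← Equiv.sum_comp (finProdFinEquiv : Fin k × Fin n ≃ Fin (k * n))
    (fun q => ((Vmat k n η)ᴴ * Y) s q * Vmat k n ξ q t)]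
  rw [Fintype.sum_prod_type]
  have hcol : ∀ q, ((Vmat k n η)ᴴ * Y) s q
      = ∑ i : Fin k, (starRingEnd ℂ) (η i) * Y (finProdFinEquiv (i, s)) q := by
    intro q
    rw [Matrix.mul_apply, ← Equiv.sum_comp (finProdFinEquiv : Fin k × Fin n ≃ Fin (k * n))
      (fun p => (Vmat k n η)ᴴ s p * Y p q), Fintype.sum_prod_type]
    refine Finset.sum_congr rfl fun i _ => ?_
    rw [Finset.sum_eq_single s]
    · rw [Matrix.conjTranspose_apply, Vmat_apply, if_pos rfl, mul_one]; rfl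
    · intro sp _ h
      rw [Matrix.conjTranspose_apply, Vmat_apply, if_neg h, mul_zero, star_zero, zero_mul]
    · intro h; exact absurd (Finset.mem_univ _) h
  have houter : ∀ j : Fin k,
      (∑ u : Fin n, ((Vmat k n η)ᴴ * Y) s (finProdFinEquiv (j, u))
        * Vmat k n ξ (finProdFinEquiv (j, u)) t)
      = (∑ i : Fin k, (starRingEnd ℂ) (η i)
          * Y (finProdFinEquiv (i, s)) (finProdFinEquiv (j, t))) * ξ j := by
    intro j
    rw [Finset.sum_eq_single t]
    · rw [hcol, Vmat_apply, if_pos rfl, mul_one]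
    · intro u _ h; rw [Vmat_apply, if_neg h, mul_zero, mul_zero]
    · intro h; exact absurd (Finset.mem_univ _) h
  simp only [houter]
  simp only [Matrix.sum_apply, Matrix.smul_apply, subBlock, Matrix.of_apply, smul_eq_mul,
    Finset.sum_mul]
  rw [Finset.sum_comm]
  refine Finset.sum_congr rfl fun i _ => Finset.sum_congr rfl fun j _ => by ring

set_option maxHeartbeats 1000000 in
private lemma amp_functional_bound {k n : ℕ} (f : Matrix (Fin n) (Fin n) ℂ →ₗ[ℂ] ℂ) {C : ℝ}
    (hC : 0 ≤ C) (hf : ∀ Z, ‖f Z‖ ≤ C * ‖Z‖) (Y : Matrix (Fin (k * n)) (Fin (k * n)) ℂ) :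
    ‖Matrix.of (fun i j : Fin k => f (subBlock Y i j))‖ ≤ C * ‖Y‖ := by
  set B : Matrix (Fin k) (Fin k) ℂ := Matrix.of (fun i j : Fin k => f (subBlock Y i j)) with hB
  refine opNorm_le_bound' _ (by positivity) fun ξ => ?_
  set η : Fin k → ℂ := B *ᵥ ξ with hη
  set S : ℝ := ∑ i, ‖η i‖ ^ 2 with hS
  set T : ℝ := ∑ j, ‖ξ j‖ ^ 2 with hT
  have hT0 : 0 ≤ T := by positivity
  have hS0 : 0 ≤ S := by positivity
  -- the key scalar identity : f of the sandwich equals S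
  have hfW : f ((Vmat k n η)ᴴ * Y * Vmat k n ξ) = ((S : ℝ) : ℂ) := by
    rw [sandwich_eq, map_sum]
    have : ∀ i : Fin k, f (∑ j : Fin k, ((starRingEnd ℂ) (η i) * ξ j) • subBlock Y i j)
        = (starRingEnd ℂ) (η i) * η i := by
      intro i
      rw [map_sum]
      simp only [_root_.map_smul, smul_eq_mul]
      have : η i = ∑ j, f (subBlock Y i j) * ξ j := by
        rw [hη]; rfl
      rw [this, Finset.mul_sum]
      exact Finset.sum_congr rfl fun j _ => by ring
    simp only [this]
    have : ∀ i : Fin k, (starRingEnd ℂ) (η i) * η i = ((‖η i‖ ^ 2 : ℝ) : ℂ) := by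
      intro i
      rw [Complex.conj_mul']
      norm_cast
    simp only [this, hS]
    push_cast
    rfl
  -- hence S ≤ C * ‖Y‖ * √S * √T
  have hnormW : ‖(Vmat k n η)ᴴ * Y * Vmat k n ξ‖ ≤ Real.sqrt S * ‖Y‖ * Real.sqrt T := by
    have h1 : ‖(Vmat k n η)ᴴ * Y * Vmat k n ξ‖ ≤ ‖(Vmat k n η)ᴴ * Y‖ * ‖Vmat k n ξ‖ :=
      Matrix.l2_opNorm_mul _ _
    have h2 : ‖(Vmat k n η)ᴴ * Y‖ ≤ ‖(Vmat k n η)ᴴ‖ * ‖Y‖ := Matrix.l2_opNorm_mul _ _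
    have h3 : ‖(Vmat k n η)ᴴ‖ = ‖Vmat k n η‖ := Matrix.l2_opNorm_conjTranspose _
    have h4 : ‖Vmat k n η‖ ≤ Real.sqrt S := by
      have := Vmat_norm_le (k := k) (n := n) ((WithLp.equiv 2 (Fin k → ℂ)).symm η)
      have hnorm : ‖(WithLp.equiv 2 (Fin k → ℂ)).symm η‖ = Real.sqrt S := by
        rw [EuclideanSpace.norm_eq]
        rfl
      rw [hnorm] at this
      exact this
    have h5 : ‖Vmat k n ξ‖ ≤ Real.sqrt T := by
      have := Vmat_norm_le (k := k) (n := n) ((WithLp.equiv 2 (Fin k → ℂ)).symm ξ)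
      have hnorm : ‖(WithLp.equiv 2 (Fin k → ℂ)).symm ξ‖ = Real.sqrt T := by
        rw [EuclideanSpace.norm_eq]
        rfl
      rw [hnorm] at this
      exact this
    calc ‖(Vmat k n η)ᴴ * Y * Vmat k n ξ‖ ≤ ‖(Vmat k n η)ᴴ * Y‖ * ‖Vmat k n ξ‖ := h1
      _ ≤ (‖(Vmat k n η)ᴴ‖ * ‖Y‖) * ‖Vmat k n ξ‖ := by
          exact mul_le_mul_of_nonneg_right h2 (norm_nonneg _)
      _ = (‖Vmat k n η‖ * ‖Y‖) * ‖Vmat k n ξ‖ := by rw [h3]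
      _ ≤ (Real.sqrt S * ‖Y‖) * Real.sqrt T := by
          refine mul_le_mul (mul_le_mul_of_nonneg_right h4 (norm_nonneg _)) h5
            (norm_nonneg _) (by positivity)
  have key : S ≤ (C * ‖Y‖) * (Real.sqrt S * Real.sqrt T) := by
    have h6 : ‖f ((Vmat k n η)ᴴ * Y * Vmat k n ξ)‖ = S := by
      rw [hfW]; rw [Complex.norm_real]; exact abs_of_nonneg hS0
    calc S = ‖f ((Vmat k n η)ᴴ * Y * Vmat k n ξ)‖ := h6.symm
      _ ≤ C * ‖(Vmat k n η)ᴴ * Y * Vmat k n ξ‖ := hf _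
      _ ≤ C * (Real.sqrt S * ‖Y‖ * Real.sqrt T) :=
          mul_le_mul_of_nonneg_left hnormW hC
      _ = (C * ‖Y‖) * (Real.sqrt S * Real.sqrt T) := by ring
  -- conclude S ≤ (C‖Y‖)² T
  show S ≤ (C * ‖Y‖) ^ 2 * T
  rcases eq_or_lt_of_le hS0 with h0 | hpos
  · rw [← h0]; positivity
  · have hsq : Real.sqrt S ≤ (C * ‖Y‖) * Real.sqrt T := by
      have hssq : Real.sqrt S > 0 := Real.sqrt_pos.mpr hpos
      have : Real.sqrt S * Real.sqrt S ≤ ((C * ‖Y‖) * Real.sqrt T) * Real.sqrt S := by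
        rw [Real.mul_self_sqrt hS0]
        calc S ≤ (C * ‖Y‖) * (Real.sqrt S * Real.sqrt T) := key
          _ = ((C * ‖Y‖) * Real.sqrt T) * Real.sqrt S := by ring
      exact le_of_mul_le_mul_right this hssq
    calc S = (Real.sqrt S) ^ 2 := (Real.sq_sqrt hS0).symm
      _ ≤ ((C * ‖Y‖) * Real.sqrt T) ^ 2 := by
          exact pow_le_pow_left₀ (Real.sqrt_nonneg _) hsq 2
      _ = (C * ‖Y‖) ^ 2 * (Real.sqrt T) ^ 2 := by ring
      _ = (C * ‖Y‖) ^ 2 * T := by rw [Real.sq_sqrt hT0]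

set_option maxHeartbeats 1000000 in
private lemma block_norm_le {k n : ℕ} (M : Matrix (Fin (k * n)) (Fin (k * n)) ℂ) {C : ℝ}
    (hC : 0 ≤ C) (h : ∀ s t : Fin n, ‖Matrix.of (fun i j : Fin k =>
      M (finProdFinEquiv (i, s)) (finProdFinEquiv (j, t)))‖ ≤ C) :
    ‖M‖ ≤ (n : ℝ) * C := by
  refine opNorm_le_bound' _ (by positivity) fun x => ?_
  set B : Fin n → Fin n → Matrix (Fin k) (Fin k) ℂ := fun s t =>
    Matrix.of (fun i j : Fin k => M (finProdFinEquiv (i, s)) (finProdFinEquiv (j, t))) with hBdef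
  set xt : Fin n → (Fin k → ℂ) := fun t => fun j => x (finProdFinEquiv (j, t)) with hxt
  have step1 : ∀ (i : Fin k) (s : Fin n),
      (M *ᵥ x) (finProdFinEquiv (i, s)) = ∑ t : Fin n, (B s t *ᵥ xt t) i := by
    intro i s
    show (∑ q, M (finProdFinEquiv (i, s)) q * x q) = _
    rw [← Equiv.sum_comp (finProdFinEquiv : Fin k × Fin n ≃ Fin (k * n))
      (fun q => M (finProdFinEquiv (i, s)) q * x q), Fintype.sum_prod_type, Finset.sum_comm]
    rfl
  -- reindex the LHS sum
  have lhs_eq : ∑ p, ‖(M *ᵥ x) p‖ ^ 2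
      = ∑ s : Fin n, ∑ i : Fin k, ‖∑ t : Fin n, (B s t *ᵥ xt t) i‖ ^ 2 := by
    rw [← Equiv.sum_comp (finProdFinEquiv : Fin k × Fin n ≃ Fin (k * n))
      (fun p => ‖(M *ᵥ x) p‖ ^ 2), Fintype.sum_prod_type, Finset.sum_comm]
    exact Finset.sum_congr rfl fun s _ => Finset.sum_congr rfl fun i _ => by rw [step1]
  have rhs_eq : ∑ q, ‖x q‖ ^ 2 = ∑ t : Fin n, ∑ j : Fin k, ‖xt t j‖ ^ 2 := by
    rw [← Equiv.sum_comp (finProdFinEquiv : Fin k × Fin n ≃ Fin (k * n))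
      (fun q => ‖x q‖ ^ 2), Fintype.sum_prod_type, Finset.sum_comm]
  rw [lhs_eq, rhs_eq]
  -- per-s bound
  have per_s : ∀ s : Fin n, ∑ i : Fin k, ‖∑ t : Fin n, (B s t *ᵥ xt t) i‖ ^ 2
      ≤ C ^ 2 * (n : ℝ) * ∑ t : Fin n, ∑ j : Fin k, ‖xt t j‖ ^ 2 := by
    intro s
    have hsum : ∑ i : Fin k, ‖∑ t : Fin n, (B s t *ᵥ xt t) i‖ ^ 2
        = ‖(WithLp.equiv 2 (Fin k → ℂ)).symm (∑ t : Fin n, (B s t *ᵥ xt t))‖ ^ 2 := by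
      rw [euclid_normSq]
      refine Finset.sum_congr rfl fun i _ => ?_
      congr 1
      simp only [WithLp.equiv_symm_apply, WithLp.ofLp_toLp, Finset.sum_apply]
    rw [hsum]
    have htri : ‖(WithLp.equiv 2 (Fin k → ℂ)).symm (∑ t : Fin n, (B s t *ᵥ xt t))‖
        ≤ ∑ t : Fin n, ‖(WithLp.equiv 2 (Fin k → ℂ)).symm (B s t *ᵥ xt t)‖ := by
      have : (WithLp.equiv 2 (Fin k → ℂ)).symm (∑ t : Fin n, (B s t *ᵥ xt t))
          = ∑ t : Fin n, (WithLp.equiv 2 (Fin k → ℂ)).symm (B s t *ᵥ xt t) := by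
        simp only [WithLp.equiv_symm_apply, WithLp.toLp_sum]
      rw [this]
      exact norm_sum_le _ _
    have hterm : ∀ t : Fin n, ‖(WithLp.equiv 2 (Fin k → ℂ)).symm (B s t *ᵥ xt t)‖
        ≤ C * ‖(WithLp.equiv 2 (Fin k → ℂ)).symm (xt t)‖ := by
      intro t
      have h1 := (B s t).l2_opNorm_mulVec ((WithLp.equiv 2 (Fin k → ℂ)).symm (xt t))
      have h2 : ‖B s t‖ ≤ C := h s t
      calc ‖(WithLp.equiv 2 (Fin k → ℂ)).symm (B s t *ᵥ xt t)‖
          ≤ ‖B s t‖ * ‖(WithLp.equiv 2 (Fin k → ℂ)).symm (xt t)‖ := h1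
        _ ≤ C * ‖(WithLp.equiv 2 (Fin k → ℂ)).symm (xt t)‖ :=
            mul_le_mul_of_nonneg_right h2 (norm_nonneg _)
    calc ‖(WithLp.equiv 2 (Fin k → ℂ)).symm (∑ t : Fin n, (B s t *ᵥ xt t))‖ ^ 2
        ≤ (∑ t : Fin n, C * ‖(WithLp.equiv 2 (Fin k → ℂ)).symm (xt t)‖) ^ 2 := by
          refine pow_le_pow_left₀ (norm_nonneg _) (htri.trans ?_) 2
          exact Finset.sum_le_sum fun t _ => hterm t
      _ = C ^ 2 * (∑ t : Fin n, ‖(WithLp.equiv 2 (Fin k → ℂ)).symm (xt t)‖) ^ 2 := by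
          rw [← Finset.mul_sum, mul_pow]
      _ ≤ C ^ 2 * ((n : ℝ) * ∑ t : Fin n, ‖(WithLp.equiv 2 (Fin k → ℂ)).symm (xt t)‖ ^ 2) := by
          refine mul_le_mul_of_nonneg_left ?_ (by positivity)
          have := sq_sum_le_card_mul_sum_sq
            (s := (Finset.univ : Finset (Fin n)))
            (f := fun t => ‖(WithLp.equiv 2 (Fin k → ℂ)).symm (xt t)‖)
          simpa using this
      _ = C ^ 2 * (n : ℝ) * ∑ t : Fin n, ∑ j : Fin k, ‖xt t j‖ ^ 2 := by
          rw [mul_assoc]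
          congr 2
          refine Finset.sum_congr rfl fun t _ => ?_
          rw [euclid_normSq]
          exact Finset.sum_congr rfl fun j _ => by
            congr 1
  calc ∑ s : Fin n, ∑ i : Fin k, ‖∑ t : Fin n, (B s t *ᵥ xt t) i‖ ^ 2
      ≤ ∑ _s : Fin n, (C ^ 2 * (n : ℝ) * ∑ t : Fin n, ∑ j : Fin k, ‖xt t j‖ ^ 2) :=
        Finset.sum_le_sum fun s _ => per_s s
    _ = ((n : ℝ) * C) ^ 2 * ∑ t : Fin n, ∑ j : Fin k, ‖xt t j‖ ^ 2 := by
        rw [Finset.sum_const, Finset.card_univ, Fintype.card_fin]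
        push_cast
        ring

private lemma coord_le_norm {m : ℕ} (v : EuclideanSpace ℂ (Fin m)) (i : Fin m) :
    ‖v i‖ ≤ ‖v‖ := by
  rw [EuclideanSpace.norm_eq, ← Real.sqrt_sq (norm_nonneg (v i))]
  exact Real.sqrt_le_sqrt (Finset.single_le_sum (f := fun j => ‖v j‖ ^ 2)
    (fun j _ => by positivity) (Finset.mem_univ i))

private lemma entry_le_opNorm {m n : ℕ} (A : Matrix (Fin m) (Fin n) ℂ) (i : Fin m) (j : Fin n) :
    ‖A i j‖ ≤ ‖A‖ := by
  have h := A.l2_opNorm_mulVec (EuclideanSpace.single j (1 : ℂ))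
  rw [EuclideanSpace.norm_single] at h
  have hm : (A *ᵥ EuclideanSpace.single j (1 : ℂ)) = fun i' => A i' j := by
    funext i'
    simp [Matrix.mulVec, dotProduct, EuclideanSpace.single_apply]
  have h2 : ‖A i j‖ ≤ ‖(EuclideanSpace.equiv (Fin m) ℂ).symm
      (A *ᵥ EuclideanSpace.single j (1 : ℂ))‖ := by
    have := coord_le_norm ((EuclideanSpace.equiv (Fin m) ℂ).symm
      (A *ᵥ EuclideanSpace.single j (1 : ℂ))) i
    simpa [hm] using this
  simpa using h2.trans h

private def ampRightInvLin {d n : ℕ} (R : Mat n →L[ℂ] MatTup d n) (k : ℕ) :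
    Mat (k * n) →ₗ[ℂ] MatTup d (k * n) where
  toFun Y := fun r => Matrix.of fun p q =>
    R (subBlock Y (finProdFinEquiv.symm p).1 (finProdFinEquiv.symm q).1) r
      (finProdFinEquiv.symm p).2 (finProdFinEquiv.symm q).2
  map_add' Y Z := by
    funext r
    ext p q
    have hsb : ∀ i j, subBlock (Y + Z) (k := k) (n := n) i j
        = subBlock Y i j + subBlock Z i j := fun i j => rfl
    simp only [Matrix.of_apply, hsb, map_add]
    rfl
  map_smul' c Y := by
    funext r
    ext p q
    have hsb : ∀ i j, subBlock (c • Y) (k := k) (n := n) i j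
        = c • subBlock Y i j := fun i j => rfl
    simp only [Matrix.of_apply, hsb, _root_.map_smul]
    rfl

private def ampRightInv {d n : ℕ} (R : Mat n →L[ℂ] MatTup d n) (k : ℕ) :
    Mat (k * n) →L[ℂ] MatTup d (k * n) :=
  LinearMap.toContinuousLinearMap (ampRightInvLin R k)

private lemma ampRightInv_apply {d n : ℕ} (R : Mat n →L[ℂ] MatTup d n) (k : ℕ)
    (Y : Mat (k * n)) (r : Fin d) (p q : Fin (k * n)) :
    ampRightInv R k Y r p q
      = R (subBlock Y (finProdFinEquiv.symm p).1 (finProdFinEquiv.symm q).1) r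
          (finProdFinEquiv.symm p).2 (finProdFinEquiv.symm q).2 := rfl

private lemma ampRightInv_spec {d n : ℕ} (L : MatTup d n →L[ℂ] Mat n)
    (R : Mat n →L[ℂ] MatTup d n) (hLR : ∀ Y : Mat n, L (R Y) = Y) (k : ℕ) (Y : Mat (k * n)) :
    ampFun (⇑L) k (ampRightInv R k Y) = Y := by
  funext p q
  show L _ _ _ = Y p q
  have harg : (fun r s t => (ampRightInv R k Y) r
        (finProdFinEquiv ((finProdFinEquiv.symm p).1, s))
        (finProdFinEquiv ((finProdFinEquiv.symm q).1, t)))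
      = R (subBlock Y (finProdFinEquiv.symm p).1 (finProdFinEquiv.symm q).1) := by
    funext r s t
    rw [ampRightInv_apply]
    simp only [Equiv.symm_apply_apply]
  rw [harg, hLR]
  show Y (finProdFinEquiv ((finProdFinEquiv.symm p).1, (finProdFinEquiv.symm p).2)) _ = _
  simp only [Prod.mk.eta, Equiv.apply_symm_apply]

private def ampLin {d n : ℕ} (L : MatTup d n →L[ℂ] Mat n) (k : ℕ) :
    MatTup d (k * n) →L[ℂ] Mat (k * n) :=
  LinearMap.toContinuousLinearMap
  { toFun := ampFun (⇑L) k
    map_add' := fun H K => by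
      funext p q
      show L _ _ _ = (_ + _)
      have : (fun r s t => (H + K) r (finProdFinEquiv ((finProdFinEquiv.symm p).1, s))
            (finProdFinEquiv ((finProdFinEquiv.symm q).1, t)))
          = (fun r s t => H r (finProdFinEquiv ((finProdFinEquiv.symm p).1, s))
              (finProdFinEquiv ((finProdFinEquiv.symm q).1, t)))
            + (fun r s t => K r (finProdFinEquiv ((finProdFinEquiv.symm p).1, s))
              (finProdFinEquiv ((finProdFinEquiv.symm q).1, t))) := rfl
      rw [this]
      exact congrFun (congrFun (map_add L _ _) _) _
    map_smul' := fun c H => by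
      funext p q
      show L _ _ _ = _
      have : (fun r s t => (c • H) r (finProdFinEquiv ((finProdFinEquiv.symm p).1, s))
            (finProdFinEquiv ((finProdFinEquiv.symm q).1, t)))
          = c • (fun r s t => H r (finProdFinEquiv ((finProdFinEquiv.symm p).1, s))
              (finProdFinEquiv ((finProdFinEquiv.symm q).1, t))) := rfl
      rw [this]
      exact congrFun (congrFun (L.map_smul c _) _) _ }

private lemma ampLin_apply {d n : ℕ} (L : MatTup d n →L[ℂ] Mat n) (k : ℕ)
    (H : MatTup d (k * n)) : ampLin L k H = ampFun (⇑L) k H := rfl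

private def entryFunc {d n : ℕ} (R : Mat n →L[ℂ] MatTup d n) (r : Fin d) (s t : Fin n) :
    Mat n →ₗ[ℂ] ℂ where
  toFun Z := R Z r s t
  map_add' A B := by show R (A + B) r s t = _; rw [map_add]; rfl
  map_smul' c A := by show R (c • A) r s t = _; rw [_root_.map_smul]; rfl

private lemma entryFunc_bound {d n : ℕ} (R : Mat n →L[ℂ] MatTup d n) (r : Fin d)
    (s t : Fin n) (Z : Mat n) : ‖entryFunc R r s t Z‖ ≤ ‖R‖ * ‖Z‖ :=
  calc ‖R Z r s t‖ ≤ ‖R Z r‖ := entry_le_opNorm _ _ _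
    _ ≤ ‖R Z‖ := norm_le_pi_norm _ r
    _ ≤ ‖R‖ * ‖Z‖ := R.le_opNorm Z

private lemma ampRightInv_norm {d n : ℕ} (R : Mat n →L[ℂ] MatTup d n) (k : ℕ) :
    ‖ampRightInv R k‖ ≤ (n : ℝ) * ‖R‖ := by
  refine ContinuousLinearMap.opNorm_le_bound _ (by positivity) fun Y => ?_
  have hbound : ∀ r : Fin d, ‖ampRightInv R k Y r‖ ≤ (n : ℝ) * (‖R‖ * ‖Y‖) := by
    intro r
    refine block_norm_le _ (by positivity) fun s t => ?_
    have hmat : Matrix.of (fun i j : Fin k => (ampRightInv R k Y r)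
          (finProdFinEquiv (i, s)) (finProdFinEquiv (j, t)))
        = Matrix.of (fun i j : Fin k => entryFunc R r s t (subBlock Y i j)) := by
      ext i j
      rw [Matrix.of_apply, Matrix.of_apply, ampRightInv_apply]
      simp only [Equiv.symm_apply_apply]
      rfl
    rw [hmat]
    exact amp_functional_bound _ (norm_nonneg R) (fun Z => entryFunc_bound R r s t Z) Y
  calc ‖ampRightInv R k Y‖ ≤ (n : ℝ) * (‖R‖ * ‖Y‖) :=
        (pi_norm_le_iff_of_nonneg (by positivity)).mpr hbound
    _ = (n : ℝ) * ‖R‖ * ‖Y‖ := by ring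

end RightInverseAux

/-- If `L : M_n^d → M_n` has a right inverse `R`, then every ampliation `L_k` has a
right inverse of norm at most `n‖R‖`; consequently `L` is completely nonsingular and
`c(L) ≥ 1/(n‖R‖)`. -/
theorem right_inverse_ampliation (d n : ℕ) (hn : 1 ≤ n)
    (L : MatTup d n →L[ℂ] Mat n) (R : Mat n →L[ℂ] MatTup d n)
    (hLR : ∀ Y : Mat n, L (R Y) = Y) :
    (∀ k : ℕ, 1 ≤ k → ∃ S : Mat (k * n) →L[ℂ] MatTup d (k * n),
      (∀ Y, ampFun (⇑L) k (S Y) = Y) ∧ ‖S‖ ≤ (n : ℝ) * ‖R‖) ∧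
    CompletelyNonsingular (⇑L) ∧ 1 / ((n : ℝ) * ‖R‖) ≤ cConst (⇑L) := by
  have part1 : ∀ k : ℕ, 1 ≤ k → ∃ S : Mat (k * n) →L[ℂ] MatTup d (k * n),
      (∀ Y, ampFun (⇑L) k (S Y) = Y) ∧ ‖S‖ ≤ (n : ℝ) * ‖R‖ :=
    fun k _ => ⟨ampRightInv R k, ampRightInv_spec L R hLR k, ampRightInv_norm R k⟩
  have hbddBelow : ∀ k : ℕ, BddBelow (RightInvVals (⇑L) k) := by
    intro k
    exact ⟨0, by rintro c ⟨S, _, rfl⟩; exact norm_nonneg S⟩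
  have hmem : ∀ k : ℕ, 1 ≤ k → ∃ c ∈ RightInvVals (⇑L) k, c ≤ (n : ℝ) * ‖R‖ := by
    intro k hk
    obtain ⟨S, hs, hb⟩ := part1 k hk
    exact ⟨‖S‖, ⟨S, hs, rfl⟩, hb⟩
  have hne : ∀ k : ℕ, 1 ≤ k → (RightInvVals (⇑L) k).Nonempty := fun k hk =>
    (hmem k hk).imp fun c hc => hc.1
  have hinf_le : ∀ k : ℕ, 1 ≤ k → sInf (RightInvVals (⇑L) k) ≤ (n : ℝ) * ‖R‖ := by
    intro k hk
    obtain ⟨c, hc, hcle⟩ := hmem k hk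
    exact (csInf_le (hbddBelow k) hc).trans hcle
  have hTne : {c : ℝ | ∃ k : ℕ, 1 ≤ k ∧ c = sInf (RightInvVals (⇑L) k)}.Nonempty :=
    ⟨sInf (RightInvVals (⇑L) 1), 1, le_rfl, rfl⟩
  have hTbdd : BddAbove {c : ℝ | ∃ k : ℕ, 1 ≤ k ∧ c = sInf (RightInvVals (⇑L) k)} :=
    ⟨(n : ℝ) * ‖R‖, by rintro c ⟨k, hk, rfl⟩; exact hinf_le k hk⟩
  have hApos_aux : ∀ c ∈ RightInvVals (⇑L) 1, 1 ≤ ‖ampLin L 1‖ * c := by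
    rintro c ⟨S, hS, rfl⟩
    have hn1 : 0 < 1 * n := by omega
    set z : Fin (1 * n) := ⟨0, hn1⟩ with hz
    set Y0 : Mat (1 * n) := Matrix.single z z (1 : ℂ) with hY0def
    have hY0 : Y0 ≠ 0 := by
      intro h
      have h2 := congrFun (congrFun h z) z
      rw [hY0def] at h2
      simp [Matrix.single_apply_same] at h2
    have hY0pos : 0 < ‖Y0‖ := norm_pos_iff.mpr hY0
    have hchain : ‖Y0‖ ≤ (‖ampLin L 1‖ * ‖S‖) * ‖Y0‖ := by
      calc ‖Y0‖ = ‖ampFun (⇑L) 1 (S Y0)‖ := by rw [hS]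
        _ = ‖ampLin L 1 (S Y0)‖ := by rw [ampLin_apply]
        _ ≤ ‖ampLin L 1‖ * ‖S Y0‖ := (ampLin L 1).le_opNorm _
        _ ≤ ‖ampLin L 1‖ * (‖S‖ * ‖Y0‖) :=
            mul_le_mul_of_nonneg_left (S.le_opNorm Y0) (norm_nonneg (ampLin L 1))
        _ = (‖ampLin L 1‖ * ‖S‖) * ‖Y0‖ := by ring
    nlinarith [hY0pos, hchain]
  obtain ⟨c1, hc1, _⟩ := hmem 1 le_rfl
  have hc1nn : 0 ≤ c1 := by
    obtain ⟨S, _, rfl⟩ := hc1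
    exact norm_nonneg S
  have hApos : 0 < ‖ampLin L 1‖ := by
    have h1 := hApos_aux c1 hc1
    nlinarith [norm_nonneg (ampLin L 1)]
  have hinf1 : ‖ampLin L 1‖⁻¹ ≤ sInf (RightInvVals (⇑L) 1) := by
    refine le_csInf (hne 1 le_rfl) fun c hc => ?_
    have h1 := hApos_aux c hc
    have h2 := (div_le_iff₀ hApos).mpr (by linarith : (1 : ℝ) ≤ c * ‖ampLin L 1‖)
    rwa [one_div] at h2
  have hsup_le : sSup {c : ℝ | ∃ k : ℕ, 1 ≤ k ∧ c = sInf (RightInvVals (⇑L) k)}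
      ≤ (n : ℝ) * ‖R‖ :=
    csSup_le hTne (by rintro c ⟨k, hk, rfl⟩; exact hinf_le k hk)
  have hsup_pos : 0 < sSup {c : ℝ | ∃ k : ℕ, 1 ≤ k ∧ c = sInf (RightInvVals (⇑L) k)} := by
    have hmemT : sInf (RightInvVals (⇑L) 1)
        ∈ {c : ℝ | ∃ k : ℕ, 1 ≤ k ∧ c = sInf (RightInvVals (⇑L) k)} := ⟨1, le_rfl, rfl⟩
    have hle := le_csSup hTbdd hmemT
    have hεpos : 0 < ‖ampLin L 1‖⁻¹ := inv_pos.mpr hApos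
    linarith [hinf1]
  refine ⟨part1, ⟨hne, hTbdd⟩, ?_⟩
  unfold cConst
  have h2 := one_div_le_one_div_of_le hsup_pos hsup_le
  rwa [one_div (sSup _)] at h2
end

section
/- Let a ∈ M_n^d, b ∈ M_m^d, r, s > 0, and suppose x ∈ F(a,r) ∩ F(b,s). Then there exists ε > 0 such that F(x,ε) ⊆ F(a,r) ∩ F(b,s). Consequently the sets F(a,r) form a basis of a topology on M^d. -/
open Matrix Filter Topology
open scoped Matrix.Norms.L2Operator Kronecker

/-! ### Auxiliary machinery for the fat topology -/

noncomputable section FatAux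

/-- Cast a matrix along an equality of dimensions. -/
def castMat {N M : ℕ} (h : N = M) (A : Mat N) : Mat M :=
  A.submatrix (Fin.cast h.symm) (Fin.cast h.symm)

@[simp] lemma castMat_rfl {N : ℕ} (A : Mat N) : castMat rfl A = A := rfl

lemma nat_div_eq_iff (k N p q : ℕ) :
    p / N = q / N ↔ (p / (k*N) = q / (k*N) ∧ (p % (k*N)) / N = (q % (k*N)) / N) := by
  have e1 : ∀ a : ℕ, a / (k*N) = a / N / k := by
    intro a; rw [mul_comm, Nat.div_div_eq_div_mul]
  have e2 : ∀ a : ℕ, a % (k*N) / N = a / N % k := by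
    intro a; rw [mul_comm, Nat.mod_mul_right_div_self]
  rw [e1, e1, e2, e2]
  constructor
  · rintro h; exact ⟨by rw [h], by rw [h]⟩
  · rintro ⟨h1, h2⟩
    calc p / N = k * (p / N / k) + p / N % k := (Nat.div_add_mod _ _).symm
    _ = k * (q / N / k) + q / N % k := by rw [h1, h2]
    _ = q / N := Nat.div_add_mod _ _

/-- The ampliation `M ↦ 1ₗ ⊗ M` as a star algebra homomorphism. -/
def ampHom (l N : ℕ) : Mat N →⋆ₐ[ℂ] Mat (l * N) where
  toFun M := Matrix.reindex finProdFinEquiv finProdFinEquiv ((1 : Matrix (Fin l) (Fin l) ℂ) ⊗ₖ M)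
  map_one' := by simp [Matrix.one_kronecker_one, Matrix.reindex_apply, Matrix.submatrix_one_equiv]
  map_mul' A B := by
    simp only [Matrix.reindex_apply]
    rw [Matrix.submatrix_mul_equiv, ← Matrix.mul_kronecker_mul, one_mul]
  map_zero' := by simp [Matrix.reindex_apply]
  map_add' A B := by
    simp only [Matrix.reindex_apply, Matrix.kronecker_add, Matrix.submatrix_add, Pi.add_apply]
  commutes' c := by
    simp only [Algebra.algebraMap_eq_smul_one, Matrix.kronecker_smul, Matrix.one_kronecker_one,
      Matrix.reindex_apply, Matrix.submatrix_smul, Pi.smul_apply, Matrix.submatrix_one_equiv]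
  map_star' M := by
    have h : ((1 : Matrix (Fin l) (Fin l) ℂ) ⊗ₖ M)ᴴ = (1 : Matrix (Fin l) (Fin l) ℂ) ⊗ₖ Mᴴ := by
      ext i j
      simp only [Matrix.conjTranspose_apply, Matrix.kroneckerMap_apply, Matrix.one_apply,
        star_mul', apply_ite (star : ℂ → ℂ), star_one, star_zero, eq_comm]
    simp only [star_eq_conjTranspose, Matrix.reindex_apply, ← h,
      Matrix.conjTranspose_submatrix]

lemma ampHom_norm_le (l N : ℕ) (M : Mat N) : ‖ampHom l N M‖ ≤ ‖M‖ := by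
  letI : CStarAlgebra (Mat N) := { }
  letI : CStarAlgebra (Mat (l * N)) := { }
  exact NonUnitalStarAlgHom.norm_apply_le (ampHom l N) M

lemma ampHom_apply (l N : ℕ) (M : Mat N) (p q : Fin (l * N)) :
    ampHom l N M p q = if p.divNat = q.divNat then M p.modNat q.modNat else 0 := by
  simp [ampHom, Matrix.reindex_apply, Matrix.submatrix_apply, Matrix.kroneckerMap_apply,
    Matrix.one_apply, finProdFinEquiv_symm_apply, ite_mul, boole_mul]

lemma ampHom_assoc (l k N : ℕ) (M : Mat N) :
    castMat (mul_assoc l k N).symm (ampHom l (k*N) (ampHom k N M)) = ampHom (l*k) N M := by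
  ext P Q
  have hpos : 0 < l * k * N := P.pos
  have hN : 0 < N := Nat.pos_of_ne_zero fun h => by subst h; simp at hpos
  simp only [castMat, Matrix.submatrix_apply, ampHom_apply]
  have hc : (Fin.cast (mul_assoc l k N) P).divNat = (Fin.cast (mul_assoc l k N) Q).divNat ∧
      ((Fin.cast (mul_assoc l k N) P).modNat.divNat = (Fin.cast (mul_assoc l k N) Q).modNat.divNat)
      ↔ (P.divNat = Q.divNat) := by
    simp only [Fin.ext_iff, Fin.coe_divNat, Fin.coe_modNat, Fin.coe_cast]
    exact (nat_div_eq_iff k N P.val Q.val).symm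
  have hm : ∀ R : Fin (l * k * N),
      ((Fin.cast (mul_assoc l k N) R).modNat.modNat : ℕ) = (R.modNat : ℕ) := by
    intro R
    simp only [Fin.coe_modNat, Fin.coe_cast]
    exact Nat.mod_mod_of_dvd _ (dvd_mul_left N k)
  by_cases h3 : P.divNat = Q.divNat
  · rw [if_pos h3]
    obtain ⟨h1, h2⟩ := hc.mpr h3
    rw [if_pos h1, if_pos h2]
    congr 1 <;> · apply Fin.ext; rw [hm]
  · rw [if_neg h3]
    by_cases h1 : (Fin.cast (mul_assoc l k N) P).divNat = (Fin.cast (mul_assoc l k N) Q).divNat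
    · rw [if_pos h1]
      by_cases h2 : (Fin.cast (mul_assoc l k N) P).modNat.divNat
          = (Fin.cast (mul_assoc l k N) Q).modNat.divNat
      · exact absurd (hc.mp ⟨h1, h2⟩) h3
      · rw [if_neg h2]
    · rw [if_neg h1]

lemma ampHom_one_eq (N : ℕ) (M : Mat N) :
    ampHom 1 N M = castMat (one_mul N).symm M := by
  ext p q
  have hlt : ∀ R : Fin (1 * N), (R.modNat : ℕ) = (R : ℕ) := by
    intro R; simp only [Fin.coe_modNat]; exact Nat.mod_eq_of_lt (by have := R.isLt; omega)
  rw [ampHom_apply, if_pos (Subsingleton.elim _ _)]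
  show M p.modNat q.modNat = M (Fin.cast (one_mul N) p) (Fin.cast (one_mul N) q)
  congr 1 <;> · apply Fin.ext; rw [hlt]; rfl

lemma unitary_norm_le {N : ℕ} {u : Mat N} (hu : u ∈ Matrix.unitaryGroup (Fin N) ℂ) :
    ‖u‖ ≤ 1 := by
  have h := CStarRing.norm_star_mul_self (x := u)
  have h1 : star u * u = 1 := hu.1
  have h2 := CStarRing.norm_star_mul_self (x := (1 : Mat N))
  rw [h1] at h
  simp only [star_one, one_mul] at h2
  have hb : ‖(1 : Mat N)‖ ≤ 1 := by nlinarith [mul_self_nonneg (‖(1:Mat N)‖ - 1)]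
  nlinarith [norm_nonneg u, mul_self_nonneg (‖u‖ - 1)]

variable {d : ℕ}

/-- Cast a tuple of matrices along an equality of dimensions. -/
def castTup {N M : ℕ} (h : N = M) (x : MatTup d N) : MatTup d M :=
  fun r => castMat h (x r)

lemma castTup_sigma {N M : ℕ} (h : N = M) (x : MatTup d N) :
    (⟨N, x⟩ : MSpace d) = ⟨M, castTup h x⟩ := by subst h; rfl

lemma castTup_norm {N M : ℕ} (h : N = M) (x : MatTup d N) : ‖castTup h x‖ = ‖x‖ := by
  subst h; rfl

lemma castTup_sub {N M : ℕ} (h : N = M) (x y : MatTup d N) :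
    castTup h (x - y) = castTup h x - castTup h y := by subst h; rfl

lemma castMat_unitary {N M : ℕ} (h : N = M) {A : Mat N}
    (hA : A ∈ Matrix.unitaryGroup (Fin N) ℂ) : castMat h A ∈ Matrix.unitaryGroup (Fin M) ℂ := by
  subst h; exact hA

lemma castTup_simConj {N M : ℕ} (h : N = M) (s : Mat N) (x : MatTup d N) :
    castTup h (simConj s x) = simConj (castMat h s) (castTup h x) := by subst h; rfl

lemma ampTup_eq {N : ℕ} (k : ℕ) (a : MatTup d N) :
    ampTup k a = fun r => ampHom k N (a r) := rfl

lemma ampTup_sub {N : ℕ} (k : ℕ) (x y : MatTup d N) :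
    ampTup k (x - y) = ampTup k x - ampTup k y := by
  funext r
  show ampHom k N ((x - y) r) = ampHom k N (x r) - ampHom k N (y r)
  rw [Pi.sub_apply, map_sub]

lemma ampTup_norm_le {N : ℕ} (k : ℕ) (x : MatTup d N) : ‖ampTup k x‖ ≤ ‖x‖ := by
  rw [pi_norm_le_iff_of_nonneg (norm_nonneg x)]
  intro r
  exact le_trans (ampHom_norm_le k N (x r)) (norm_le_pi_norm x r)

lemma norm_simConj_le {N : ℕ} {u : Mat N} (hu : u ∈ Matrix.unitaryGroup (Fin N) ℂ)
    (x : MatTup d N) : ‖simConj u x‖ ≤ ‖x‖ := by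
  rw [pi_norm_le_iff_of_nonneg (norm_nonneg x)]
  intro r
  have h1 : u⁻¹ = star u := Matrix.inv_eq_left_inv hu.1
  have h2 : ‖u‖ ≤ 1 := unitary_norm_le hu
  have h3 : ‖star u‖ ≤ 1 := unitary_norm_le (Unitary.star_mem hu)
  have h4 : ‖star u * x r * u‖ ≤ ‖star u‖ * ‖x r‖ * ‖u‖ :=
    le_trans (norm_mul_le _ _) (mul_le_mul_of_nonneg_right (norm_mul_le _ _) (norm_nonneg u))
  have h5 : ‖x r‖ ≤ ‖x‖ := norm_le_pi_norm x r
  show ‖u⁻¹ * x r * u‖ ≤ ‖x‖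
  rw [h1]
  have e1 : ‖star u‖ * ‖x r‖ ≤ ‖x r‖ := mul_le_of_le_one_left (norm_nonneg (x r)) h3
  have e2 : ‖star u‖ * ‖x r‖ * ‖u‖ ≤ ‖x r‖ * 1 :=
    mul_le_mul e1 h2 (norm_nonneg u) (norm_nonneg (x r))
  rw [mul_one] at e2
  linarith

lemma simConj_simConj {N : ℕ} (s t : Mat N) (x : MatTup d N) :
    simConj s (simConj t x) = simConj (t * s) x := by
  funext r
  simp [simConj, Matrix.mul_inv_rev, mul_assoc]

lemma simConj_one {N : ℕ} (x : MatTup d N) : simConj (1 : Mat N) x = x := by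
  funext r; simp [simConj]

lemma simConj_star_simConj {N : ℕ} {U : Mat N} (hU : U ∈ Matrix.unitaryGroup (Fin N) ℂ)
    (x : MatTup d N) : simConj (star U) (simConj U x) = x := by
  rw [simConj_simConj, hU.2, simConj_one]

lemma simConj_sub {N : ℕ} (s : Mat N) (x y : MatTup d N) :
    simConj s (x - y) = simConj s x - simConj s y := by
  funext r
  simp [simConj, Matrix.mul_sub, Matrix.sub_mul]

lemma ampHom_unitary {N : ℕ} (l : ℕ) {u : Mat N} (hu : u ∈ Matrix.unitaryGroup (Fin N) ℂ) :
    ampHom l N u ∈ Matrix.unitaryGroup (Fin (l * N)) ℂ :=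
  ⟨by rw [← StarHomClass.map_star, ← _root_.map_mul, hu.1, _root_.map_one],
   by rw [← StarHomClass.map_star, ← _root_.map_mul, hu.2, _root_.map_one]⟩

lemma ampTup_simConj {N : ℕ} (l : ℕ) {u : Mat N} (hu : u ∈ Matrix.unitaryGroup (Fin N) ℂ)
    (y : MatTup d N) :
    ampTup l (simConj u y) = simConj (ampHom l N u) (ampTup l y) := by
  have h1 : u⁻¹ = star u := Matrix.inv_eq_left_inv hu.1
  have h2 : (ampHom l N u)⁻¹ = star (ampHom l N u) :=
    Matrix.inv_eq_left_inv (ampHom_unitary l hu).1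
  funext r
  show ampHom l N (u⁻¹ * y r * u) = (ampHom l N u)⁻¹ * ampHom l N (y r) * ampHom l N u
  rw [h1, h2, _root_.map_mul, _root_.map_mul, StarHomClass.map_star]

lemma fball_mono {c : MSpace d} {ε ε' : ℝ} (h : ε ≤ ε') : FBall c ε ⊆ FBall c ε' := by
  rintro z ⟨k, hk, x, hx, u, hz⟩
  exact ⟨k, hk, x, lt_of_lt_of_le hx h, u, hz⟩

lemma fball_self (x : MSpace d) {ε : ℝ} (hε : 0 < ε) : x ∈ FBall x ε := by
  obtain ⟨N, t⟩ := x
  refine ⟨1, le_refl 1, castTup (one_mul N).symm t, ?_, 1, ?_⟩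
  · have h : ampTup 1 t = castTup (one_mul N).symm t :=
      funext fun r => ampHom_one_eq N (t r)
    rw [← h, sub_self]
    simpa using hε
  · rw [show ((1 : Matrix.unitaryGroup (Fin (1 * N)) ℂ) : Mat (1 * N)) = 1 from rfl,
      simConj_one]
    exact castTup_sigma (one_mul N).symm t

lemma fball_key {a x : MSpace d} {r : ℝ} (hx : x ∈ FBall a r) :
    ∃ ε : ℝ, 0 < ε ∧ FBall x ε ⊆ FBall a r := by
  obtain ⟨N, aa⟩ := a
  obtain ⟨k, hk, y, hy, u, rfl⟩ := hx
  refine ⟨r - ‖y - ampTup k aa‖, by simp only at hy; linarith, ?_⟩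
  rintro z ⟨l, hl, w, hw, v, rfl⟩
  set U : Mat (l * (k * N)) := ampHom l (k * N) (u : Mat (k * N)) with hUdef
  have hUu : U ∈ Matrix.unitaryGroup (Fin (l * (k * N))) ℂ := ampHom_unitary l u.2
  have hUs : star U ∈ Matrix.unitaryGroup (Fin (l * (k * N))) ℂ := Unitary.star_mem hUu
  set w' : MatTup d (l * (k * N)) := simConj (star U) w with hw'def
  have hww : simConj U w' = w := by
    rw [hw'def, simConj_simConj, hUu.1, simConj_one]
  have e2 : ampTup l (simConj (u : Mat (k * N)) y) = simConj U (ampTup l y) := by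
    rw [ampTup_simConj l u.2]
  have e : w' - ampTup l y = simConj (star U) (w - ampTup l (simConj (u : Mat (k * N)) y)) := by
    rw [e2, simConj_sub, simConj_star_simConj hUu]
  have h3 : ‖w' - ampTup l y‖ < r - ‖y - ampTup k aa‖ := by
    rw [e]
    exact lt_of_le_of_lt (norm_simConj_le hUs _) hw
  have h4 : ‖w' - ampTup l (ampTup k aa)‖ < r := by
    have t1 : ‖w' - ampTup l (ampTup k aa)‖ ≤
        ‖w' - ampTup l y‖ + ‖ampTup l y - ampTup l (ampTup k aa)‖ := by
      have := norm_add_le (w' - ampTup l y) (ampTup l y - ampTup l (ampTup k aa))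
      rwa [sub_add_sub_cancel] at this
    have t2 : ‖ampTup l y - ampTup l (ampTup k aa)‖ ≤ ‖y - ampTup k aa‖ := by
      rw [← ampTup_sub]; exact ampTup_norm_le l _
    linarith
  refine ⟨l * k, Nat.one_le_iff_ne_zero.mpr (Nat.mul_ne_zero (by omega) (by omega)),
    castTup (mul_assoc l k N).symm w', ?_,
    ⟨castMat (mul_assoc l k N).symm (U * (v : Mat (l * (k * N)))),
      castMat_unitary _ (mul_mem hUu v.2)⟩, ?_⟩
  · have hA : ampTup (l * k) aa = castTup (mul_assoc l k N).symm (ampTup l (ampTup k aa)) :=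
      funext fun r' => (ampHom_assoc l k N (aa r')).symm
    rw [hA, ← castTup_sub, castTup_norm]
    exact h4
  · show (⟨l * (k * N), simConj ((v : Mat (l * (k * N)))) w⟩ : MSpace d) =
      ⟨(l * k) * N, simConj (castMat (mul_assoc l k N).symm (U * (v : Mat (l * (k * N)))))
        (castTup (mul_assoc l k N).symm w')⟩
    rw [← hww, simConj_simConj, ← castTup_simConj]
    exact castTup_sigma (mul_assoc l k N).symm _

end FatAux

/-- If `x ∈ F(a,r) ∩ F(b,s)` then some `F(x,ε)` is contained in the intersection;
consequently the sets `F(a,r)` form the basis of a topology (the fat topology) on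
`M^d`. -/
theorem fball_basis (d n m : ℕ) (a : MatTup d n) (b : MatTup d m) (r s : ℝ)
    (x : MSpace d)
    (hx : x ∈ FBall (⟨n, a⟩ : MSpace d) r ∩ FBall (⟨m, b⟩ : MSpace d) s) :
    (∃ ε : ℝ, 0 < ε ∧
      FBall x ε ⊆ FBall (⟨n, a⟩ : MSpace d) r ∩ FBall (⟨m, b⟩ : MSpace d) s) ∧
    @TopologicalSpace.IsTopologicalBasis (MSpace d)
      (TopologicalSpace.generateFrom
        {S | ∃ (c : MSpace d) (ρ : ℝ), 0 < ρ ∧ S = FBall c ρ})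
      {S | ∃ (c : MSpace d) (ρ : ℝ), 0 < ρ ∧ S = FBall c ρ} := by
  obtain ⟨hx1, hx2⟩ := hx
  obtain ⟨ε₁, hε₁, hs₁⟩ := fball_key hx1
  obtain ⟨ε₂, hε₂, hs₂⟩ := fball_key hx2
  constructor
  · exact ⟨min ε₁ ε₂, lt_min hε₁ hε₂, fun z hz =>
      ⟨hs₁ (fball_mono (min_le_left _ _) hz), hs₂ (fball_mono (min_le_right _ _) hz)⟩⟩
  · refine @TopologicalSpace.IsTopologicalBasis.mk (MSpace d)
      (TopologicalSpace.generateFrom {S | ∃ (c : MSpace d) (ρ : ℝ), 0 < ρ ∧ S = FBall c ρ})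
      {S | ∃ (c : MSpace d) (ρ : ℝ), 0 < ρ ∧ S = FBall c ρ} ?_ ?_ rfl
    · rintro t₁ ⟨c₁, ρ₁, hρ₁, rfl⟩ t₂ ⟨c₂, ρ₂, hρ₂, rfl⟩ z ⟨hz₁, hz₂⟩
      obtain ⟨δ₁, hδ₁, hd₁⟩ := fball_key hz₁
      obtain ⟨δ₂, hδ₂, hd₂⟩ := fball_key hz₂
      exact ⟨FBall z (min δ₁ δ₂), ⟨z, min δ₁ δ₂, lt_min hδ₁ hδ₂, rfl⟩,
        fball_self z (lt_min hδ₁ hδ₂), fun y hy =>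
          ⟨hd₁ (fball_mono (min_le_left _ _) hy), hd₂ (fball_mono (min_le_right _ _) hy)⟩⟩
    · exact Set.sUnion_eq_univ_iff.mpr fun z =>
        ⟨FBall z 1, ⟨z, 1, one_pos, rfl⟩, fball_self z one_pos⟩
end
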